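/- arXiv:1406.2597 — 4 statements merged into one kernel-verified Lean document; each statement's English description precedes it below -/
import Mathlib

section
/- Let f be a positive continuous linear functional on ℓ∞ and define μ : 𝒫(ℕ) → ℝ by μ(A) = f(χ_A), where χ_A is the characteristic sequence of A. Then μ is a density measure if and only if f extends the Cesàro mean, i.e., f(x) = C(x) for every x ∈ Ces. -/
open Filter Topology

noncomputable section

/-- The space `ℓ∞` of bounded real sequences. -/
abbrev EllInfty : Type := lp (fun _ : ℕ => ℝ) ⊤

/-- The characteristic sequence of a set `A ⊆ ℕ` (as a plain function). -/
def chiFun (A : Set ℕ) : ℕ → ℝ := A.indicator 1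

lemma chiFun_memℓp (A : Set ℕ) : Memℓp (chiFun A) ⊤ := by
  apply memℓp_infty
  refine ⟨1, ?_⟩
  rintro r ⟨n, rfl⟩
  by_cases h : n ∈ A <;> simp [chiFun, Set.indicator, h]

/-- The characteristic sequence of a set `A ⊆ ℕ` as an element of `ℓ∞`. -/
def chi (A : Set ℕ) : EllInfty := ⟨chiFun A, chiFun_memℓp A⟩

/-- `A(n) = |A ∩ {1,…,n}|` (as a real number). -/
def count (A : Set ℕ) (n : ℕ) : ℝ := ∑ k ∈ Finset.Icc 1 n, chiFun A k

/-- `A` has asymptotic density `d`, i.e. `A(n)/n → d`. -/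
def HasDensity (A : Set ℕ) (d : ℝ) : Prop :=
  Tendsto (fun n => count A n / n) atTop (𝓝 d)

/-- A density measure: a finitely additive measure `μ : 𝒫(ℕ) → [0,1]` with `μ(ℕ) = 1`
which extends the asymptotic density. -/
def IsDensityMeasure (μ : Set ℕ → ℝ) : Prop :=
  (∀ A B : Set ℕ, Disjoint A B → μ (A ∪ B) = μ A + μ B) ∧
  (∀ A : Set ℕ, μ A ∈ Set.Icc (0 : ℝ) 1) ∧
  μ Set.univ = 1 ∧
  (∀ A d, HasDensity A d → μ A = d)

/-- The sequence of Cesàro averages `(x₁ + … + xₙ)/n`. -/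
def cesaroAvg (x : ℕ → ℝ) (n : ℕ) : ℝ := (∑ i ∈ Finset.Icc 1 n, x i) / n

/-- `x` has Cesàro mean `c`. -/
def HasCesaro (x : ℕ → ℝ) (c : ℝ) : Prop := Tendsto (cesaroAvg x) atTop (𝓝 c)

/-- A functional on `ℓ∞` is positive if it is nonnegative on nonnegative sequences. -/
def IsPositiveFunctional (f : EllInfty → ℝ) : Prop :=
  ∀ x : EllInfty, (∀ n, 0 ≤ x n) → 0 ≤ f x

/-- A functional on `ℓ∞` extends the Cesàro mean. -/
def ExtendsCesaro (f : EllInfty → ℝ) : Prop :=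
  ∀ (x : EllInfty) (c : ℝ), HasCesaro (⇑x) c → f x = c

/-- The set of positive continuous linear functionals on `ℓ∞` extending the Cesàro mean. -/
def Cesex : Set (EllInfty →L[ℝ] ℝ) :=
  {f | IsPositiveFunctional f ∧ ExtendsCesaro f}

/-- `f_C(x) = sup { f(x) : f ∈ Cesex }`. -/
def fC (x : EllInfty) : ℝ := sSup ((fun f : EllInfty →L[ℝ] ℝ => f x) '' Cesex)

/-- `Θ_{θ,n}(x) = (Σ_{θn < i ≤ n} x_i) / (n(1-θ))`. -/
def Theta (x : ℕ → ℝ) (θ : ℝ) (n : ℕ) : ℝ :=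
  (∑ i ∈ Finset.Icc 1 n, if θ * n < (i : ℝ) then x i else 0) / (n * (1 - θ))

/-- `Θ_θ(x) = limsup_{n → ∞} Θ_{θ,n}(x)`. -/
def ThetaSup (x : ℕ → ℝ) (θ : ℝ) : ℝ := limsup (Theta x θ) atTop

/-- `t(x) = lim_{θ → 1⁻} Θ_θ(x)`. -/
def tFun (x : ℕ → ℝ) : ℝ := limUnder (𝓝[<] (1 : ℝ)) (ThetaSup x)

/-- `A_α(n) = Σ_{k ∈ A, k ≤ n} k^α`. -/
def aSum (A : Set ℕ) (α : ℝ) (n : ℕ) : ℝ :=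
  ∑ k ∈ Finset.Icc 1 n, chiFun A k * (k : ℝ) ^ α

/-- The upper `α`-density `d̄_α(A) = limsup_{n→∞} A_α(n)/ℕ_α(n)`. -/
def upperADens (A : Set ℕ) (α : ℝ) : ℝ :=
  limsup (fun n => aSum A α n / aSum Set.univ α n) atTop

/-- The lower `α`-density `d̲_α(A) = liminf_{n→∞} A_α(n)/ℕ_α(n)`. -/
def lowerADens (A : Set ℕ) (α : ℝ) : ℝ :=
  liminf (fun n => aSum A α n / aSum Set.univ α n) atTop

/-- `d̄_∞(A) = lim_{α→∞} d̄_α(A)`. -/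
def dInftyUpper (A : Set ℕ) : ℝ := limUnder (atTop : Filter ℝ) (upperADens A)

/-- `d̲_∞(A) = lim_{α→∞} d̲_α(A)`. -/
def dInftyLower (A : Set ℕ) : ℝ := limUnder (atTop : Filter ℝ) (lowerADens A)

/-- The quotient `(A(n) - A(⌊θn⌋))/(n - θn)` appearing in the Pólya density. -/
def polyaQuot (A : Set ℕ) (θ : ℝ) (n : ℕ) : ℝ :=
  (count A n - count A ⌊θ * n⌋₊) / (n - θ * n)

/-- The upper Pólya density `p̄(A)`. -/
def pUpper (A : Set ℕ) : ℝ :=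
  limUnder (𝓝[<] (1 : ℝ)) (fun θ => limsup (polyaQuot A θ) atTop)

/-- The lower Pólya density `p̲(A)`. -/
def pLower (A : Set ℕ) : ℝ :=
  limUnder (𝓝[<] (1 : ℝ)) (fun θ => liminf (polyaQuot A θ) atTop)

/-- `λ̄(A) = sup { μ(A) : μ a density measure }`. -/
def lamUpper (A : Set ℕ) : ℝ := sSup {r | ∃ μ, IsDensityMeasure μ ∧ μ A = r}

/-- `λ̲(A) = inf { μ(A) : μ a density measure }`. -/
def lamLower (A : Set ℕ) : ℝ := sInf {r | ∃ μ, IsDensityMeasure μ ∧ μ A = r}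

/-- `d̄*(A) = inf { d(B) : B ⊇ A, B ∈ 𝒟 }`. -/
def dUpperStar (A : Set ℕ) : ℝ := sInf {r | ∃ B, A ⊆ B ∧ HasDensity B r}

/-- `d̲*(A) = sup { d(B) : B ⊆ A, B ∈ 𝒟 }`. -/
def dLowerStar (A : Set ℕ) : ℝ := sSup {r | ∃ B, B ⊆ A ∧ HasDensity B r}

/-- The `ℱ`-limit of a (bounded) real sequence along an ultrafilter `ℱ`:
the unique `L` with `Tendsto x ℱ (𝓝 L)` (when it exists). -/
def ulim (F : Ultrafilter ℕ) (x : ℕ → ℝ) : ℝ := limUnder (F : Filter ℕ) x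

/-- An ultrafilter is free (non-principal) iff it contains all cofinite sets. -/
def IsFreeUltrafilter (F : Ultrafilter ℕ) : Prop := (F : Filter ℕ) ≤ Filter.cofinite

/-- The set of positive functionals extending Cesàro mean, inside the weak-* dual of `ℓ∞`. -/
def CesexW : Set (WeakDual ℝ EllInfty) :=
  {f | (∀ x : EllInfty, (∀ n, 0 ≤ x n) → 0 ≤ f x) ∧
    ∀ (x : EllInfty) (c : ℝ), HasCesaro (⇑x) c → f x = c}


/-! ### Auxiliary lemmas for `stmt1` -/

lemma chi_coe (A : Set ℕ) : ⇑(chi A) = chiFun A := rfl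

lemma chiFun_of_mem {A : Set ℕ} {n : ℕ} (h : n ∈ A) : chiFun A n = 1 := by
  simp [chiFun, h]

lemma chiFun_of_not_mem {A : Set ℕ} {n : ℕ} (h : n ∉ A) : chiFun A n = 0 := by
  simp [chiFun, h]

lemma chiFun_nonneg (A : Set ℕ) (n : ℕ) : 0 ≤ chiFun A n := by
  by_cases h : n ∈ A
  · rw [chiFun_of_mem h]; norm_num
  · rw [chiFun_of_not_mem h]

lemma chiFun_le_one (A : Set ℕ) (n : ℕ) : chiFun A n ≤ 1 := by
  by_cases h : n ∈ A
  · rw [chiFun_of_mem h]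
  · rw [chiFun_of_not_mem h]; norm_num

lemma chiFun_univ (n : ℕ) : chiFun Set.univ n = 1 := by
  simp [chiFun]

lemma count_succ (A : Set ℕ) (n : ℕ) :
    count A (n + 1) = count A n + chiFun A (n + 1) := by
  unfold count
  rw [Finset.sum_Icc_succ_top (Nat.succ_le_succ (Nat.zero_le n))]

lemma count_zero (A : Set ℕ) : count A 0 = 0 := by
  unfold count
  rw [show Finset.Icc 1 0 = ∅ from rfl, Finset.sum_empty]

lemma hasCesaro_univ : HasCesaro (chiFun Set.univ) 1 := by
  unfold HasCesaro
  apply Tendsto.congr' (f₁ := fun _ => (1:ℝ))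
  · filter_upwards [Filter.eventually_ge_atTop 1] with n hn
    unfold cesaroAvg
    have : ∀ i ∈ Finset.Icc 1 n, chiFun Set.univ i = 1 := fun i _ => chiFun_univ i
    rw [Finset.sum_congr rfl this, Finset.sum_const, Nat.card_Icc]
    have hn' : (0:ℝ) < n := by exact_mod_cast hn
    field_simp
    simp
  · exact tendsto_const_nhds

lemma hasDensity_zero_singleton : HasDensity {0} 0 := by
  unfold HasDensity
  apply Tendsto.congr' (f₁ := fun _ => (0:ℝ))
  · filter_upwards with n
    have : count {0} n = 0 := by
      unfold count
      apply Finset.sum_eq_zero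
      intro i hi
      have h1 : 1 ≤ i := (Finset.mem_Icc.1 hi).1
      apply chiFun_of_not_mem
      simp only [Set.mem_singleton_iff]
      omega
    rw [this, zero_div]
  · exact tendsto_const_nhds

/-- Positivity bound: a positive functional with `f(χ_ℕ) = 1` satisfies `|f w| ≤ δ`
whenever `|w n| ≤ δ` for all `n`. -/
lemma abs_f_le (f : EllInfty →L[ℝ] ℝ) (hf : IsPositiveFunctional f)
    (h1 : f (chi Set.univ) = 1) (w : EllInfty) (δ : ℝ) (hw : ∀ n, |w n| ≤ δ) :
    |f w| ≤ δ := by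
  have key : ∀ v : EllInfty, (∀ n, |v n| ≤ δ) → f v ≤ δ := by
    intro v hv
    have h0 : 0 ≤ f (δ • chi Set.univ - v) := by
      apply hf
      intro n
      rw [lp.coeFn_sub, Pi.sub_apply, lp.coeFn_smul, Pi.smul_apply, chi_coe, chiFun_univ,
        smul_eq_mul, mul_one]
      have := abs_le.1 (hv n)
      linarith [this.2]
    rw [map_sub, map_smul, h1, smul_eq_mul, mul_one, sub_nonneg] at h0
    exact h0
  rw [abs_le]
  constructor
  · have := key (-w) (fun n => by rw [lp.coeFn_neg, Pi.neg_apply, abs_neg]; exact hw n)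
    rw [map_neg] at this
    linarith
  · exact key w hw

/-- Partial sums `S n = x₁ + … + xₙ`. -/
def partialSum (x : ℕ → ℝ) (n : ℕ) : ℝ := ∑ i ∈ Finset.Icc 1 n, x i

lemma partialSum_zero (x : ℕ → ℝ) : partialSum x 0 = 0 := by
  unfold partialSum
  rw [show Finset.Icc 1 0 = ∅ from rfl, Finset.sum_empty]

lemma partialSum_succ (x : ℕ → ℝ) (n : ℕ) :
    partialSum x (n + 1) = partialSum x n + x (n + 1) := by
  unfold partialSum
  rw [Finset.sum_Icc_succ_top (Nat.succ_le_succ (Nat.zero_le n))]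

/-- The "greedy" set with offset `r` associated to a `[0,1]`-valued sequence. -/
def Bset (x : ℕ → ℝ) (r : ℝ) : Set ℕ :=
  {n | ⌊partialSum x (n - 1) + r⌋ < ⌊partialSum x n + r⌋}

lemma chiFun_Bset_zero (x : ℕ → ℝ) (r : ℝ) : chiFun (Bset x r) 0 = 0 := by
  apply chiFun_of_not_mem
  simp [Bset]

lemma floor_step (x : ℕ → ℝ) (hx0 : ∀ n, 0 ≤ x n) (hx1 : ∀ n, x n ≤ 1) (r : ℝ) (n : ℕ) :
    ⌊partialSum x n + r⌋ ≤ ⌊partialSum x (n + 1) + r⌋ ∧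
      ⌊partialSum x (n + 1) + r⌋ ≤ ⌊partialSum x n + r⌋ + 1 := by
  constructor
  · apply Int.floor_le_floor
    rw [partialSum_succ]
    linarith [hx0 (n + 1)]
  · have h : partialSum x (n + 1) + r ≤ (partialSum x n + r) + 1 := by
      rw [partialSum_succ]; linarith [hx1 (n + 1)]
    calc ⌊partialSum x (n + 1) + r⌋ ≤ ⌊(partialSum x n + r) + 1⌋ := Int.floor_le_floor h
      _ = ⌊partialSum x n + r⌋ + 1 := Int.floor_add_one _

lemma chiFun_Bset_succ (x : ℕ → ℝ) (hx0 : ∀ n, 0 ≤ x n) (hx1 : ∀ n, x n ≤ 1)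
    (r : ℝ) (n : ℕ) :
    chiFun (Bset x r) (n + 1)
      = ((⌊partialSum x (n + 1) + r⌋ - ⌊partialSum x n + r⌋ : ℤ) : ℝ) := by
  obtain ⟨hle, hle1⟩ := floor_step x hx0 hx1 r n
  have hmem : (n + 1) ∈ Bset x r ↔ ⌊partialSum x n + r⌋ < ⌊partialSum x (n + 1) + r⌋ := by
    simp [Bset]
  by_cases h : (n + 1) ∈ Bset x r
  · rw [chiFun_of_mem h]
    rw [hmem] at h
    have : ⌊partialSum x (n + 1) + r⌋ - ⌊partialSum x n + r⌋ = 1 := by omega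
    rw [this]; norm_num
  · rw [chiFun_of_not_mem h]
    rw [hmem] at h
    have : ⌊partialSum x (n + 1) + r⌋ - ⌊partialSum x n + r⌋ = 0 := by omega
    rw [this]; norm_num

lemma count_Bset (x : ℕ → ℝ) (hx0 : ∀ n, 0 ≤ x n) (hx1 : ∀ n, x n ≤ 1)
    (r : ℝ) (hr0 : 0 ≤ r) (hr1 : r < 1) (n : ℕ) :
    count (Bset x r) n = ((⌊partialSum x n + r⌋ : ℤ) : ℝ) := by
  induction n with
  | zero =>
      rw [count_zero, partialSum_zero, zero_add]
      rw [show ⌊r⌋ = 0 from Int.floor_eq_zero_iff.2 ⟨hr0, hr1⟩]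
      norm_num
  | succ n ih =>
      rw [count_succ, ih, chiFun_Bset_succ x hx0 hx1 r n]
      push_cast
      ring

lemma hasDensity_Bset (x : ℕ → ℝ) (hx0 : ∀ n, 0 ≤ x n) (hx1 : ∀ n, x n ≤ 1)
    (c : ℝ) (hc : Filter.Tendsto (fun n => partialSum x n / n) Filter.atTop (nhds c))
    (r : ℝ) (hr0 : 0 ≤ r) (hr1 : r < 1) :
    HasDensity (Bset x r) c := by
  unfold HasDensity
  have hcount : ∀ n : ℕ, count (Bset x r) n / n = ((⌊partialSum x n + r⌋ : ℤ) : ℝ) / n :=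
    fun n => by rw [count_Bset x hx0 hx1 r hr0 hr1 n]
  apply Tendsto.congr (fun n => (hcount n).symm)
  have hlow : Filter.Tendsto (fun n : ℕ => (partialSum x n + (r - 1)) / n)
      Filter.atTop (nhds c) := by
    have : Filter.Tendsto (fun n : ℕ => partialSum x n / n + (r - 1) / n)
        Filter.atTop (nhds (c + 0)) :=
      hc.add (tendsto_const_div_atTop_nhds_zero_nat (r - 1))
    rw [add_zero] at this
    apply this.congr
    intro n
    rw [add_div]
  have hhigh : Filter.Tendsto (fun n : ℕ => (partialSum x n + r) / n)
      Filter.atTop (nhds c) := by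
    have : Filter.Tendsto (fun n : ℕ => partialSum x n / n + r / n)
        Filter.atTop (nhds (c + 0)) :=
      hc.add (tendsto_const_div_atTop_nhds_zero_nat r)
    rw [add_zero] at this
    apply this.congr
    intro n
    rw [add_div]
  apply tendsto_of_tendsto_of_tendsto_of_le_of_le' hlow hhigh
  · filter_upwards with n
    have h1 : partialSum x n + (r - 1) ≤ ((⌊partialSum x n + r⌋ : ℤ) : ℝ) := by
      have := Int.sub_one_lt_floor (partialSum x n + r)
      linarith
    have hn0 : (0:ℝ) ≤ n := Nat.cast_nonneg n
    gcongr
  · filter_upwards with n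
    have h1 : ((⌊partialSum x n + r⌋ : ℤ) : ℝ) ≤ partialSum x n + r := Int.floor_le _
    have hn0 : (0:ℝ) ≤ n := Nat.cast_nonneg n
    gcongr



lemma count_ge (m : ℕ) (k : ℤ) (hk0 : 0 ≤ k) (hkm : k ≤ m) :
    ∑ j ∈ Finset.range m, (if (m : ℤ) - k ≤ (j : ℤ) then (1:ℤ) else 0) = k := by
  lift k to ℕ using hk0
  have hkm' : k ≤ m := by exact_mod_cast hkm
  have h : ∀ j ∈ Finset.range m, (if (m : ℤ) - (k:ℤ) ≤ (j : ℤ) then (1:ℤ) else 0)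
      = if m - k ≤ j then (1:ℤ) else 0 := by
    intro j _
    congr 1
    simp only [eq_iff_iff]
    omega
  rw [Finset.sum_congr rfl h, Finset.range_eq_Ico,
    ← Finset.sum_Ico_consecutive _ (Nat.zero_le (m - k)) (Nat.sub_le m k)]
  have h1 : ∀ j ∈ Finset.Ico 0 (m - k), (if m - k ≤ j then (1:ℤ) else 0) = 0 := by
    intro j hj; rw [if_neg]; exact Nat.not_le.2 (Finset.mem_Ico.1 hj).2
  have h2 : ∀ j ∈ Finset.Ico (m - k) m, (if m - k ≤ j then (1:ℤ) else 0) = 1 := by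
    intro j hj; rw [if_pos (Finset.mem_Ico.1 hj).1]
  rw [Finset.sum_congr rfl h1, Finset.sum_congr rfl h2, Finset.sum_const_zero,
    Finset.sum_const, Nat.card_Ico]
  simp; omega

lemma hermite (m : ℕ) (hm : 0 < m) (t : ℝ) :
    ∑ j ∈ Finset.range m, ⌊t + (j : ℝ) / m⌋ = ⌊(m : ℝ) * t⌋ := by
  have hm' : (0:ℝ) < m := by exact_mod_cast hm
  set s : ℝ := Int.fract t with hs
  have hs0 : 0 ≤ s := Int.fract_nonneg t
  have hs1 : s < 1 := Int.fract_lt_one t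
  set k : ℤ := ⌊(m:ℝ) * s⌋ with hk
  have hk0 : 0 ≤ k := Int.floor_nonneg.2 (by positivity)
  have hkle : (k:ℝ) ≤ (m:ℝ) * s := Int.floor_le _
  have hkm : k < (m:ℤ) := by
    rw [hk, Int.floor_lt]
    push_cast
    nlinarith
  have hts : t = (⌊t⌋ : ℝ) + s := (Int.floor_add_fract t).symm
  have hterm : ∀ j ∈ Finset.range m,
      ⌊t + (j:ℝ)/m⌋ = ⌊t⌋ + (if (m:ℤ) - k ≤ (j:ℤ) then (1:ℤ) else 0) := by
    intro j hj
    have hjm : j < m := Finset.mem_range.1 hj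
    have hjm' : (j:ℝ) < m := by exact_mod_cast hjm
    have h1 : t + (j:ℝ)/m = (⌊t⌋ : ℝ) + (s + (j:ℝ)/m) := by linear_combination hts
    rw [h1, Int.floor_intCast_add]
    congr 1
    split_ifs with hcond
    · have hc : (m:ℝ) - (k:ℝ) ≤ (j:ℝ) := by exact_mod_cast hcond
      rw [Int.floor_eq_iff]
      constructor
      · rw [Int.cast_one, ← sub_nonneg]
        have : (0:ℝ) ≤ ((m:ℝ)*s - k + (j - (m - k)))/m :=
          div_nonneg (by linarith) (le_of_lt hm')
        calc (0:ℝ) ≤ ((m:ℝ)*s - k + (j - (m - k)))/m := this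
          _ = s + (j:ℝ)/m - 1 := by field_simp; ring
      · have : (j:ℝ)/m < 1 := (div_lt_one hm').2 hjm'
        push_cast; linarith
    · have hc : (j:ℝ) < (m:ℝ) - (k:ℝ) := by exact_mod_cast not_le.1 hcond
      have hms : (m:ℝ)*s < k + 1 := Int.lt_floor_add_one _
      rw [Int.floor_eq_iff]
      constructor
      · push_cast; positivity
      · push_cast
        rw [← sub_pos]
        have : (0:ℝ) < ((k:ℝ) + 1 - (m:ℝ)*s + ((m - k) - 1 - j))/m := by
          apply div_pos _ hm'
          have : (j:ℝ) ≤ (m:ℝ) - (k:ℝ) - 1 := by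
            have : (j:ℤ) ≤ (m:ℤ) - k - 1 := by omega
            exact_mod_cast this
          linarith
        calc (0:ℝ) < ((k:ℝ) + 1 - (m:ℝ)*s + ((m - k) - 1 - j))/m := this
          _ = 0 + 1 - (s + (j:ℝ)/m) := by field_simp; ring
  rw [Finset.sum_congr rfl hterm, Finset.sum_add_distrib, Finset.sum_const,
    Finset.card_range, count_ge m k hk0 (le_of_lt hkm)]
  have : (m:ℝ) * t = ((m * ⌊t⌋ : ℤ) : ℝ) + (m:ℝ) * s := by push_cast; linear_combination (m:ℝ) * hts
  rw [this, Int.floor_intCast_add, ← hk]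
  simp [nsmul_eq_mul]

/-- The key step: a positive functional inducing a density measure agrees with the Cesàro
mean on `[0,1]`-valued sequences vanishing at `0`. -/
lemma key_cesaro (f : EllInfty →L[ℝ] ℝ) (hf : IsPositiveFunctional f)
    (h1 : f (chi Set.univ) = 1)
    (hdens : ∀ A d, HasDensity A d → f (chi A) = d)
    (x : EllInfty) (hx0 : ∀ n, 0 ≤ x n) (hx1 : ∀ n, x n ≤ 1) (hx00 : x 0 = 0)
    (c : ℝ) (hc : HasCesaro (⇑x) c) : f x = c := by
  have hcS : Filter.Tendsto (fun n => partialSum (⇑x) n / n) Filter.atTop (nhds c) := hc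
  have main : ∀ m : ℕ, 0 < m → |f x - c| ≤ 1 / m := by
    intro m hm
    have hm' : (0:ℝ) < m := by exact_mod_cast hm
    set y : EllInfty := (m:ℝ)⁻¹ • ∑ j ∈ Finset.range m, chi (Bset (⇑x) ((j:ℝ)/m)) with hy
    have hdj : ∀ j ∈ Finset.range m, f (chi (Bset (⇑x) ((j:ℝ)/m))) = c := by
      intro j hj
      apply hdens
      apply hasDensity_Bset (⇑x) hx0 hx1 c hcS
      · positivity
      · exact (div_lt_one hm').2 (by exact_mod_cast Finset.mem_range.1 hj)
    have hfy : f y = c := by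
      rw [hy, map_smul, map_sum, Finset.sum_congr rfl hdj, Finset.sum_const,
        Finset.card_range, smul_eq_mul, nsmul_eq_mul]
      field_simp
    have hbound : ∀ n, |(x - y) n| ≤ 1 / m := by
      intro n
      have hyn : y n = (m:ℝ)⁻¹ * ∑ j ∈ Finset.range m, chiFun (Bset (⇑x) ((j:ℝ)/m)) n := by
        rw [hy, lp.coeFn_smul, Pi.smul_apply, smul_eq_mul, lp.coeFn_sum, Finset.sum_apply]
        rfl
      rw [lp.coeFn_sub, Pi.sub_apply]
      cases n with
      | zero =>
          have : ∀ j ∈ Finset.range m, chiFun (Bset (⇑x) ((j:ℝ)/m)) 0 = 0 :=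
            fun j _ => chiFun_Bset_zero _ _
          rw [hx00, hyn, Finset.sum_congr rfl this, Finset.sum_const_zero, mul_zero,
            sub_zero, abs_zero]
          positivity
      | succ n =>
          set a : ℝ := (m:ℝ) * partialSum (⇑x) (n + 1) with ha
          set b : ℝ := (m:ℝ) * partialSum (⇑x) n with hb
          have hsum : ∑ j ∈ Finset.range m, chiFun (Bset (⇑x) ((j:ℝ)/m)) (n + 1)
              = ((⌊a⌋ - ⌊b⌋ : ℤ) : ℝ) := by
            have hterm : ∀ j ∈ Finset.range m, chiFun (Bset (⇑x) ((j:ℝ)/m)) (n + 1)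
                = ((⌊partialSum (⇑x) (n+1) + (j:ℝ)/m⌋ - ⌊partialSum (⇑x) n + (j:ℝ)/m⌋ : ℤ) : ℝ) :=
              fun j _ => chiFun_Bset_succ (⇑x) hx0 hx1 ((j:ℝ)/m) n
            rw [Finset.sum_congr rfl hterm]
            rw [show ∑ j ∈ Finset.range m,
                ((⌊partialSum (⇑x) (n+1) + (j:ℝ)/m⌋ - ⌊partialSum (⇑x) n + (j:ℝ)/m⌋ : ℤ) : ℝ)
              = ((∑ j ∈ Finset.range m,
                (⌊partialSum (⇑x) (n+1) + (j:ℝ)/m⌋ - ⌊partialSum (⇑x) n + (j:ℝ)/m⌋) : ℤ) : ℝ) by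
              push_cast
              ring]
            rw [Finset.sum_sub_distrib, hermite m hm (partialSum (⇑x) (n+1)),
              hermite m hm (partialSum (⇑x) n)]
          have hxn : x (n + 1) = (m:ℝ)⁻¹ * (a - b) := by
            have hab : a - b = (m:ℝ) * (x (n + 1)) := by
              rw [ha, hb, partialSum_succ]; ring
            rw [hab]
            field_simp
          have hfla : ((⌊a⌋ : ℤ) : ℝ) ≤ a := Int.floor_le a
          have hfla' : a < ((⌊a⌋ : ℤ) : ℝ) + 1 := Int.lt_floor_add_one a
          have hflb : ((⌊b⌋ : ℤ) : ℝ) ≤ b := Int.floor_le b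
          have hflb' : b < ((⌊b⌋ : ℤ) : ℝ) + 1 := Int.lt_floor_add_one b
          have habs : |(a - b) - (((⌊a⌋ - ⌊b⌋ : ℤ)) : ℝ)| ≤ 1 := by
            rw [abs_le]
            push_cast
            constructor <;> linarith
          rw [hyn, hsum, hxn, ← mul_sub, abs_mul, abs_of_nonneg (inv_nonneg.2 hm'.le),
            one_div]
          simpa using mul_le_mul_of_nonneg_left habs (inv_nonneg.2 hm'.le)
    have : f x - c = f (x - y) := by rw [map_sub, hfy]
    rw [this]
    exact abs_f_le f hf h1 (x - y) (1/m) hbound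
  by_contra hne
  have hpos : 0 < |f x - c| := abs_pos.2 (sub_ne_zero.2 hne)
  obtain ⟨n, hn⟩ := exists_nat_one_div_lt hpos
  have hle := main (n + 1) (Nat.succ_pos n)
  have : (1:ℝ) / ((n:ℝ) + 1) = 1 / ((n + 1 : ℕ) : ℝ) := by push_cast; ring
  rw [this] at hn
  linarith


/-- A positive continuous linear functional `f` on `ℓ∞` induces a density measure
`A ↦ f(χ_A)` if and only if `f` extends the Cesàro mean. -/
theorem stmt1 (f : EllInfty →L[ℝ] ℝ) (hf : IsPositiveFunctional f) :
    IsDensityMeasure (fun A : Set ℕ => f (chi A)) ↔ ExtendsCesaro f := by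
  constructor
  · rintro ⟨hadd, hbounds, huniv, hdens⟩
    have h1 : f (chi Set.univ) = 1 := huniv
    have hdens' : ∀ A d, HasDensity A d → f (chi A) = d := hdens
    intro x c hc
    set M : ℝ := ‖x‖ + 1 with hM
    have hM0 : 0 < M := by positivity
    have habs : ∀ n, |x n| ≤ ‖x‖ := fun n => by
      have := lp.norm_apply_le_norm ENNReal.top_ne_zero x n
      rwa [Real.norm_eq_abs] at this
    set x1 : EllInfty := (2*M)⁻¹ • (x + M • chi Set.univ) with hx1def
    have hx1n : ∀ n, x1 n = (2*M)⁻¹ * (x n + M) := by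
      intro n
      simp only [hx1def, lp.coeFn_smul, Pi.smul_apply, lp.coeFn_add, Pi.add_apply,
        chi_coe, chiFun_univ, smul_eq_mul, mul_one]
    set x2 : EllInfty := x1 - (x1 0) • chi {0} with hx2def
    have hx2n : ∀ n, x2 n = x1 n - x1 0 * chiFun {0} n := by
      intro n
      simp only [hx2def, lp.coeFn_sub, Pi.sub_apply, lp.coeFn_smul, Pi.smul_apply, chi_coe,
        smul_eq_mul]
    have hx2eq : ∀ n : ℕ, 1 ≤ n → x2 n = x1 n := by
      intro n hn
      rw [hx2n, chiFun_of_not_mem (by simp only [Set.mem_singleton_iff]; omega : n ∉ ({0} : Set ℕ)),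
        mul_zero, sub_zero]
    have hx20 : x2 0 = 0 := by
      rw [hx2n, chiFun_of_mem (Set.mem_singleton 0), mul_one, sub_self]
    have hx1bd : ∀ n, 0 ≤ x1 n ∧ x1 n ≤ 1 := by
      intro n
      rw [hx1n]
      have h := abs_le.1 (habs n)
      constructor
      · apply mul_nonneg (by positivity)
        rw [hM]; linarith [h.1]
      · have hle : x n + M ≤ 2*M := by rw [hM]; linarith [h.2]
        calc (2*M)⁻¹ * (x n + M) ≤ (2*M)⁻¹ * (2*M) := by
              apply mul_le_mul_of_nonneg_left hle (by positivity)
          _ = 1 := by field_simp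
    have hx2bd : ∀ n, 0 ≤ x2 n ∧ x2 n ≤ 1 := by
      intro n
      cases n with
      | zero => rw [hx20]; norm_num
      | succ n => rw [hx2eq (n+1) (Nat.succ_le_succ (Nat.zero_le n))]; exact hx1bd (n+1)
    set c2 : ℝ := (2*M)⁻¹ * (c + M) with hc2
    have hcesx2 : HasCesaro (⇑x2) c2 := by
      unfold HasCesaro
      have hg : Filter.Tendsto (fun n => (2*M)⁻¹ * (cesaroAvg (⇑x) n + M))
          Filter.atTop (nhds c2) := by
        rw [hc2]
        exact (hc.add_const M).const_mul _
      apply Filter.Tendsto.congr' ?_ hg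
      filter_upwards [Filter.eventually_ge_atTop 1] with n hn
      have hn' : (n:ℝ) ≠ 0 := by
        have : (0:ℝ) < n := by exact_mod_cast hn
        linarith
      have hsum2 : ∑ i ∈ Finset.Icc 1 n, x2 i = ∑ i ∈ Finset.Icc 1 n, x1 i :=
        Finset.sum_congr rfl fun i hi => hx2eq i (Finset.mem_Icc.1 hi).1
      have hsum1 : ∑ i ∈ Finset.Icc 1 n, x1 i
          = (2*M)⁻¹ * ((∑ i ∈ Finset.Icc 1 n, x i) + n * M) := by
        rw [Finset.sum_congr rfl fun i _ => hx1n i, ← Finset.mul_sum,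
          Finset.sum_add_distrib, Finset.sum_const, Nat.card_Icc, nsmul_eq_mul,
          Nat.add_sub_cancel]
      show (2*M)⁻¹ * (cesaroAvg (⇑x) n + M) = cesaroAvg (⇑x2) n
      unfold cesaroAvg
      rw [hsum2, hsum1]
      field_simp
    have hkey := key_cesaro f hf h1 hdens' x2 (fun n => (hx2bd n).1) (fun n => (hx2bd n).2)
      hx20 c2 hcesx2
    have hchi0 : f (chi {0}) = 0 := hdens' {0} 0 hasDensity_zero_singleton
    have hfx2 : f x2 = f x1 := by
      rw [hx2def, map_sub, f.map_smul (x1 0) (chi {0}), hchi0, smul_zero, sub_zero]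
    have hfx1 : f x1 = (2*M)⁻¹ * (f x + M) := by
      rw [hx1def, map_smul, map_add, map_smul, h1, smul_eq_mul, smul_eq_mul, mul_one]
    have heq : (2*M)⁻¹ * (f x + M) = (2*M)⁻¹ * (c + M) := by
      rw [← hfx1, ← hfx2, hkey, hc2]
    have h2M : (2*M)⁻¹ ≠ 0 := by positivity
    have := mul_left_cancel₀ h2M heq
    linarith
  · intro hC
    have h1 : f (chi Set.univ) = 1 := hC (chi Set.univ) 1 (by rw [chi_coe]; exact hasCesaro_univ)
    refine ⟨?_, ?_, h1, ?_⟩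
    · intro A B hAB
      have hchi : chi (A ∪ B) = chi A + chi B := by
        apply lp.ext
        rw [lp.coeFn_add, chi_coe, chi_coe, chi_coe]
        exact Set.indicator_union_of_disjoint hAB 1
      show f (chi (A ∪ B)) = f (chi A) + f (chi B)
      rw [hchi, map_add]
    · intro A
      constructor
      · exact hf (chi A) fun n => by rw [chi_coe]; exact chiFun_nonneg A n
      · have h0 : 0 ≤ f (chi Set.univ - chi A) := by
          apply hf
          intro n
          rw [lp.coeFn_sub, Pi.sub_apply, chi_coe, chi_coe, chiFun_univ]
          linarith [chiFun_le_one A n]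
        rw [map_sub, h1] at h0
        linarith
    · intro A d hA
      exact hC (chi A) d (by rw [chi_coe]; exact hA)
end
end

section
/- If −1 ≤ α ≤ β, then for every A ⊆ ℕ one has d̲_β(A) ≤ d̲_α(A) ≤ d̄_α(A) ≤ d̄_β(A). -/
open Filter Topology

noncomputable section

namespace Stmt2Aux

lemma my_le_of_forall_pos_le_add {a b : ℝ} (h : ∀ ε : ℝ, 0 < ε → a ≤ b + ε) : a ≤ b := by
  by_contra hc
  push_neg at hc
  have := h ((a - b) / 2) (by linarith)
  linarith

lemma chiFun_nonneg (A : Set ℕ) (k : ℕ) : 0 ≤ chiFun A k :=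
  Set.indicator_nonneg (fun _ _ => zero_le_one) k

lemma chiFun_le_one (A : Set ℕ) (k : ℕ) : chiFun A k ≤ 1 := by
  unfold chiFun
  by_cases h : k ∈ A <;> simp [Set.indicator, h]

lemma aSum_nonneg (A : Set ℕ) (α : ℝ) (n : ℕ) : 0 ≤ aSum A α n :=
  Finset.sum_nonneg fun k _ =>
    mul_nonneg (chiFun_nonneg A k) (Real.rpow_nonneg (Nat.cast_nonneg k) α)

lemma aSum_mono_set (A : Set ℕ) (α : ℝ) (n : ℕ) : aSum A α n ≤ aSum Set.univ α n := by
  refine Finset.sum_le_sum fun k _ => ?_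
  refine mul_le_mul_of_nonneg_right ?_ (Real.rpow_nonneg (Nat.cast_nonneg k) α)
  have : chiFun Set.univ k = 1 := by simp [chiFun]
  rw [this]; exact chiFun_le_one A k

lemma aSum_univ_pos (α : ℝ) {n : ℕ} (hn : 1 ≤ n) : 0 < aSum Set.univ α n := by
  refine Finset.sum_pos (fun k hk => ?_) ⟨1, by simp [hn]⟩
  rw [Finset.mem_Icc] at hk
  have hk0 : (0:ℝ) < (k:ℝ) := by exact_mod_cast hk.1
  have : chiFun Set.univ k = 1 := by simp [chiFun]
  rw [this, one_mul]
  exact Real.rpow_pos_of_pos hk0 α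

lemma aSum_univ_tendsto {α : ℝ} (h1 : -1 ≤ α) :
    Tendsto (aSum Set.univ α) atTop atTop := by
  refine tendsto_atTop_mono ?_ Real.tendsto_sum_range_one_div_nat_succ_atTop
  intro n
  have : aSum Set.univ α n = ∑ i ∈ Finset.range n, ((1 + i : ℕ) : ℝ) ^ α := by
    unfold aSum
    rw [show Finset.Icc 1 n = Finset.Ico 1 (n + 1) by rfl, Finset.sum_Ico_eq_sum_range]
    simp [chiFun]
  rw [this]
  refine Finset.sum_le_sum fun i _ => ?_
  have hpos : (1:ℝ) ≤ ((1 + i : ℕ) : ℝ) := by push_cast; linarith [Nat.cast_nonneg (α := ℝ) i]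
  have := Real.rpow_le_rpow_of_exponent_le hpos h1
  rw [Real.rpow_neg_one] at this
  refine le_trans (le_of_eq ?_) this
  push_cast
  rw [add_comm (1:ℝ)]
  field_simp

lemma abel (A : Set ℕ) (α β : ℝ) (n : ℕ) :
    aSum A α n = aSum A β n * (n : ℝ) ^ (α - β)
      + ∑ k ∈ Finset.Ico 1 n, aSum A β k * ((k : ℝ) ^ (α - β) - ((k : ℝ) + 1) ^ (α - β)) := by
  induction n with
  | zero => simp [aSum]
  | succ n ih =>
    rcases Nat.eq_zero_or_pos n with rfl | hn
    · simp [aSum, Real.one_rpow]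
    · have hpos : (0:ℝ) < (n:ℝ) + 1 := by positivity
      have hnpos : (0:ℝ) < (n:ℝ) := by exact_mod_cast hn
      have hA : aSum A α (n+1) = aSum A α n + chiFun A (n+1) * ((n:ℝ)+1) ^ α := by
        unfold aSum
        rw [Finset.sum_Icc_succ_top (Nat.le_add_left 1 n)]
        push_cast; ring_nf
      have hB : aSum A β (n+1) = aSum A β n + chiFun A (n+1) * ((n:ℝ)+1) ^ β := by
        unfold aSum
        rw [Finset.sum_Icc_succ_top (Nat.le_add_left 1 n)]
        push_cast; ring_nf
      have hS : ∑ k ∈ Finset.Ico 1 (n+1), aSum A β k * ((k : ℝ) ^ (α - β) - ((k : ℝ) + 1) ^ (α - β))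
          = (∑ k ∈ Finset.Ico 1 n, aSum A β k * ((k : ℝ) ^ (α - β) - ((k : ℝ) + 1) ^ (α - β)))
            + aSum A β n * ((n : ℝ) ^ (α - β) - ((n : ℝ) + 1) ^ (α - β)) :=
        Finset.sum_Ico_succ_top hn _
      have hc1 : ((n:ℝ)+1) ^ β * ((n:ℝ)+1) ^ (α - β) = ((n:ℝ)+1) ^ α := by
        rw [← Real.rpow_add hpos]; congr 1; ring
      rw [hA, hB, hS, ih]
      push_cast
      linear_combination -chiFun A (n+1) * hc1

lemma abel_diff (A : Set ℕ) (α β r : ℝ) (n : ℕ) :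
    aSum A α n - r * aSum Set.univ α n
      = (aSum A β n - r * aSum Set.univ β n) * (n:ℝ) ^ (α - β)
        + ∑ k ∈ Finset.Ico 1 n,
            (aSum A β k - r * aSum Set.univ β k) * ((k:ℝ) ^ (α - β) - ((k:ℝ) + 1) ^ (α - β)) := by
  rw [abel A α β n, abel Set.univ α β n]
  rw [Finset.sum_congr rfl (fun k _ => by
    ring_nf :
    ∀ k ∈ Finset.Ico 1 n,
      (aSum A β k - r * aSum Set.univ β k) * ((k:ℝ) ^ (α - β) - ((k:ℝ) + 1) ^ (α - β))
        = aSum A β k * ((k:ℝ) ^ (α - β) - ((k:ℝ) + 1) ^ (α - β))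
          - r * (aSum Set.univ β k * ((k:ℝ) ^ (α - β) - ((k:ℝ) + 1) ^ (α - β))))]
  rw [Finset.sum_sub_distrib, ← Finset.mul_sum]
  ring

lemma delta_nonneg {α β : ℝ} (hab : α ≤ β) {k : ℕ} (hk : 1 ≤ k) :
    0 ≤ (k:ℝ) ^ (α - β) - ((k:ℝ) + 1) ^ (α - β) := by
  have h0 : (0:ℝ) < (k:ℝ) := by exact_mod_cast hk
  have := Real.rpow_le_rpow_of_nonpos h0 (by linarith : (k:ℝ) ≤ (k:ℝ) + 1)
    (by linarith : α - β ≤ 0)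
  linarith

lemma key_upper {α β : ℝ} (hab : α ≤ β) (A : Set ℕ) (r : ℝ) (n0 : ℕ) (h1 : 1 ≤ n0)
    (hg : ∀ k, n0 ≤ k → aSum A β k ≤ r * aSum Set.univ β k) :
    ∀ n, n0 ≤ n → aSum A α n ≤ r * aSum Set.univ α n
      + ∑ k ∈ Finset.Ico 1 n0,
          |aSum A β k - r * aSum Set.univ β k| * ((k:ℝ) ^ (α - β) - ((k:ℝ) + 1) ^ (α - β)) := by
  intro n hn
  have hd := abel_diff A α β r n
  rw [← Finset.sum_Ico_consecutive _ h1 hn] at hd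
  have hb1 : (aSum A β n - r * aSum Set.univ β n) * (n:ℝ) ^ (α - β) ≤ 0 :=
    mul_nonpos_iff.2 (Or.inr ⟨sub_nonpos.2 (hg n hn), Real.rpow_nonneg (Nat.cast_nonneg n) _⟩)
  have hb2 : ∑ k ∈ Finset.Ico n0 n,
      (aSum A β k - r * aSum Set.univ β k) * ((k:ℝ) ^ (α - β) - ((k:ℝ) + 1) ^ (α - β)) ≤ 0 := by
    refine Finset.sum_nonpos fun k hk => ?_
    rw [Finset.mem_Ico] at hk
    exact mul_nonpos_iff.2 (Or.inr ⟨sub_nonpos.2 (hg k hk.1), delta_nonneg hab (le_trans h1 hk.1)⟩)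
  have hb3 : ∑ k ∈ Finset.Ico 1 n0,
      (aSum A β k - r * aSum Set.univ β k) * ((k:ℝ) ^ (α - β) - ((k:ℝ) + 1) ^ (α - β))
      ≤ ∑ k ∈ Finset.Ico 1 n0,
          |aSum A β k - r * aSum Set.univ β k| * ((k:ℝ) ^ (α - β) - ((k:ℝ) + 1) ^ (α - β)) := by
    refine Finset.sum_le_sum fun k hk => ?_
    rw [Finset.mem_Ico] at hk
    exact mul_le_mul_of_nonneg_right (le_abs_self _) (delta_nonneg hab hk.1)
  linarith

lemma key_lower {α β : ℝ} (hab : α ≤ β) (A : Set ℕ) (r : ℝ) (n0 : ℕ) (h1 : 1 ≤ n0)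
    (hg : ∀ k, n0 ≤ k → r * aSum Set.univ β k ≤ aSum A β k) :
    ∀ n, n0 ≤ n → r * aSum Set.univ α n
      - ∑ k ∈ Finset.Ico 1 n0,
          |aSum A β k - r * aSum Set.univ β k| * ((k:ℝ) ^ (α - β) - ((k:ℝ) + 1) ^ (α - β))
      ≤ aSum A α n := by
  intro n hn
  have hd := abel_diff A α β r n
  rw [← Finset.sum_Ico_consecutive _ h1 hn] at hd
  have hb1 : 0 ≤ (aSum A β n - r * aSum Set.univ β n) * (n:ℝ) ^ (α - β) :=
    mul_nonneg (sub_nonneg.2 (hg n hn)) (Real.rpow_nonneg (Nat.cast_nonneg n) _)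
  have hb2 : 0 ≤ ∑ k ∈ Finset.Ico n0 n,
      (aSum A β k - r * aSum Set.univ β k) * ((k:ℝ) ^ (α - β) - ((k:ℝ) + 1) ^ (α - β)) := by
    refine Finset.sum_nonneg fun k hk => ?_
    rw [Finset.mem_Ico] at hk
    exact mul_nonneg (sub_nonneg.2 (hg k hk.1)) (delta_nonneg hab (le_trans h1 hk.1))
  have hb3 : -∑ k ∈ Finset.Ico 1 n0,
          |aSum A β k - r * aSum Set.univ β k| * ((k:ℝ) ^ (α - β) - ((k:ℝ) + 1) ^ (α - β))
      ≤ ∑ k ∈ Finset.Ico 1 n0,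
      (aSum A β k - r * aSum Set.univ β k) * ((k:ℝ) ^ (α - β) - ((k:ℝ) + 1) ^ (α - β)) := by
    rw [← Finset.sum_neg_distrib]
    refine Finset.sum_le_sum fun k hk => ?_
    rw [Finset.mem_Ico] at hk
    rw [← neg_mul]
    exact mul_le_mul_of_nonneg_right (neg_abs_le _) (delta_nonneg hab hk.1)
  linarith

lemma ratio_nonneg (A : Set ℕ) (α : ℝ) (n : ℕ) :
    0 ≤ aSum A α n / aSum Set.univ α n :=
  div_nonneg (aSum_nonneg A α n) (aSum_nonneg Set.univ α n)

lemma ratio_le_one (A : Set ℕ) (α : ℝ) (n : ℕ) :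
    aSum A α n / aSum Set.univ α n ≤ 1 := by
  rcases Nat.eq_zero_or_pos n with rfl | hn
  · simp [aSum]
  · exact (div_le_one (aSum_univ_pos α hn)).2 (aSum_mono_set A α n)

lemma upper_mono {α β : ℝ} (h1 : -1 ≤ α) (h2 : α ≤ β) (A : Set ℕ) :
    upperADens A α ≤ upperADens A β := by
  set u := fun n => aSum A β n / aSum Set.univ β n with hu
  set v := fun n => aSum A α n / aSum Set.univ α n with hv
  have hub : IsBoundedUnder (· ≤ ·) atTop u := isBoundedUnder_of ⟨1, ratio_le_one A β⟩
  have hvlb : IsBoundedUnder (· ≥ ·) atTop v := isBoundedUnder_of ⟨0, ratio_nonneg A α⟩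
  have hLeq : upperADens A β = limsup u atTop := by rw [hu]; rfl
  have hVeq : upperADens A α = limsup v atTop := by rw [hv]; rfl
  set L := upperADens A β with hL
  refine my_le_of_forall_pos_le_add fun ε hε => ?_
  have hε2 : 0 < ε / 2 := by linarith
  have hev : ∀ᶠ k in atTop, u k < L + ε / 2 :=
    eventually_lt_of_limsup_lt (by rw [← hLeq]; linarith) hub
  obtain ⟨n0', hn0'⟩ := eventually_atTop.1 hev
  set n0 := max n0' 1 with hn0def
  have h1n0 : 1 ≤ n0 := le_max_right _ _
  have hg : ∀ k, n0 ≤ k → aSum A β k ≤ (L + ε / 2) * aSum Set.univ β k := by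
    intro k hk
    have h1k : 1 ≤ k := le_trans h1n0 hk
    have hpos := aSum_univ_pos β h1k
    have hlt := hn0' k (le_trans (le_max_left _ _) hk)
    rw [hu, div_lt_iff₀ hpos] at hlt
    linarith
  set C := ∑ k ∈ Finset.Ico 1 n0,
      |aSum A β k - (L + ε / 2) * aSum Set.univ β k|
        * ((k:ℝ) ^ (α - β) - ((k:ℝ) + 1) ^ (α - β)) with hC
  have key := key_upper h2 A (L + ε / 2) n0 h1n0 hg
  have hT := aSum_univ_tendsto h1
  have hev2 : ∀ᶠ n in atTop, v n ≤ L + ε := by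
    filter_upwards [hT.eventually_ge_atTop (max C 0 / (ε / 2)), eventually_ge_atTop n0]
      with n hCn hn
    have h1n : 1 ≤ n := le_trans h1n0 hn
    have hpos := aSum_univ_pos α h1n
    have hkey := key n hn
    have hCle : C ≤ ε / 2 * aSum Set.univ α n := by
      have := (div_le_iff₀ hε2).1 hCn
      have h0 : C ≤ max C 0 := le_max_left _ _
      nlinarith
    rw [hv, div_le_iff₀ hpos]
    have hid : (L + ε) * aSum Set.univ α n
        = (L + ε / 2) * aSum Set.univ α n + ε / 2 * aSum Set.univ α n := by ring
    linarith
  rw [hVeq]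
  exact limsup_le_of_le hvlb.isCoboundedUnder_le hev2

lemma lower_mono {α β : ℝ} (h1 : -1 ≤ α) (h2 : α ≤ β) (A : Set ℕ) :
    lowerADens A β ≤ lowerADens A α := by
  set u := fun n => aSum A β n / aSum Set.univ β n with hu
  set v := fun n => aSum A α n / aSum Set.univ α n with hv
  have hub : IsBoundedUnder (· ≤ ·) atTop u := isBoundedUnder_of ⟨1, ratio_le_one A β⟩
  have hvub : IsBoundedUnder (· ≤ ·) atTop v := isBoundedUnder_of ⟨1, ratio_le_one A α⟩
  have hleq : lowerADens A β = liminf u atTop := by rw [hu]; rfl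
  have hveq : lowerADens A α = liminf v atTop := by rw [hv]; rfl
  set l := lowerADens A β with hl
  refine my_le_of_forall_pos_le_add fun ε hε => ?_
  have hε2 : 0 < ε / 2 := by linarith
  have hev : ∀ᶠ k in atTop, l - ε / 2 < u k :=
    eventually_lt_of_lt_liminf (by rw [← hleq]; linarith)
      (isBoundedUnder_of ⟨0, ratio_nonneg A β⟩)
  obtain ⟨n0', hn0'⟩ := eventually_atTop.1 hev
  set n0 := max n0' 1 with hn0def
  have h1n0 : 1 ≤ n0 := le_max_right _ _
  have hg : ∀ k, n0 ≤ k → (l - ε / 2) * aSum Set.univ β k ≤ aSum A β k := by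
    intro k hk
    have h1k : 1 ≤ k := le_trans h1n0 hk
    have hpos := aSum_univ_pos β h1k
    have hlt := hn0' k (le_trans (le_max_left _ _) hk)
    rw [hu, lt_div_iff₀ hpos] at hlt
    linarith
  set C := ∑ k ∈ Finset.Ico 1 n0,
      |aSum A β k - (l - ε / 2) * aSum Set.univ β k|
        * ((k:ℝ) ^ (α - β) - ((k:ℝ) + 1) ^ (α - β)) with hC
  have key := key_lower h2 A (l - ε / 2) n0 h1n0 hg
  have hT := aSum_univ_tendsto h1
  have hev2 : ∀ᶠ n in atTop, l - ε ≤ v n := by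
    filter_upwards [hT.eventually_ge_atTop (max C 0 / (ε / 2)), eventually_ge_atTop n0]
      with n hCn hn
    have h1n : 1 ≤ n := le_trans h1n0 hn
    have hpos := aSum_univ_pos α h1n
    have hkey := key n hn
    have hCle : C ≤ ε / 2 * aSum Set.univ α n := by
      have := (div_le_iff₀ hε2).1 hCn
      have h0 : C ≤ max C 0 := le_max_left _ _
      nlinarith
    rw [hv, le_div_iff₀ hpos]
    have hid : (l - ε) * aSum Set.univ α n
        = (l - ε / 2) * aSum Set.univ α n - ε / 2 * aSum Set.univ α n := by ring
    linarith
  have := le_liminf_of_le hvub.isCoboundedUnder_ge hev2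
  rw [hveq]
  linarith

end Stmt2Aux

/-- Monotonicity of `α`-densities: if `-1 ≤ α ≤ β` then
`d̲_β(A) ≤ d̲_α(A) ≤ d̄_α(A) ≤ d̄_β(A)`. -/
theorem stmt2 (α β : ℝ) (h1 : -1 ≤ α) (h2 : α ≤ β) (A : Set ℕ) :
    lowerADens A β ≤ lowerADens A α ∧ lowerADens A α ≤ upperADens A α ∧
      upperADens A α ≤ upperADens A β := by
  refine ⟨Stmt2Aux.lower_mono h1 h2 A, ?_, Stmt2Aux.upper_mono h1 h2 A⟩
  unfold lowerADens upperADens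
  have hb1 : IsBoundedUnder (· ≤ ·) atTop (fun n => aSum A α n / aSum Set.univ α n) :=
    isBoundedUnder_of ⟨1, Stmt2Aux.ratio_le_one A α⟩
  have hb2 : IsBoundedUnder (· ≥ ·) atTop (fun n => aSum A α n / aSum Set.univ α n) :=
    isBoundedUnder_of ⟨0, Stmt2Aux.ratio_nonneg A α⟩
  exact Filter.liminf_le_limsup hb1 hb2
end
end

section
/- For every A ⊆ ℕ one has 0 ≤ λ̲(A) ≤ d̲_∞(A) ≤ d̄_∞(A) ≤ λ̄(A) ≤ 1. -/
open Filter Topology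

noncomputable section

namespace Stmt5Aux

lemma chiFun_nonneg (A : Set ℕ) (k : ℕ) : 0 ≤ chiFun A k :=
  Set.indicator_nonneg (fun _ _ => zero_le_one) k

lemma chiFun_le_one (A : Set ℕ) (k : ℕ) : chiFun A k ≤ 1 := by
  by_cases h : k ∈ A <;> simp [chiFun, Set.indicator, h]

lemma chiFun_univ (k : ℕ) : chiFun Set.univ k = 1 := by simp [chiFun]

lemma rpow_pos {k : ℕ} (hk : k ∈ Finset.Icc 1 n) (α : ℝ) : (0:ℝ) < (k:ℝ) ^ α :=
  Real.rpow_pos_of_pos (by exact_mod_cast (Finset.mem_Icc.mp hk).1) α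

lemma aSum_nonneg (A : Set ℕ) (α : ℝ) (n : ℕ) : 0 ≤ aSum A α n :=
  Finset.sum_nonneg fun k hk => mul_nonneg (chiFun_nonneg A k) (le_of_lt (rpow_pos hk α))

lemma aSum_le_univ (A : Set ℕ) (α : ℝ) (n : ℕ) : aSum A α n ≤ aSum Set.univ α n := by
  refine Finset.sum_le_sum fun k hk => ?_
  rw [chiFun_univ, one_mul]
  exact mul_le_of_le_one_left (le_of_lt (rpow_pos hk α)) (chiFun_le_one A k)

lemma aSum_univ_eq (α : ℝ) (n : ℕ) : aSum Set.univ α n = ∑ k ∈ Finset.Icc 1 n, (k:ℝ) ^ α := by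
  unfold aSum; refine Finset.sum_congr rfl fun k _ => by rw [chiFun_univ, one_mul]

lemma aSum_univ_pos (α : ℝ) {n : ℕ} (hn : 1 ≤ n) : 0 < aSum Set.univ α n := by
  rw [aSum_univ_eq]
  refine Finset.sum_pos (fun k hk => rpow_pos hk α) ⟨1, by simp [hn]⟩

/-- the ratio `A_α(n)/ℕ_α(n)` -/
def R (A : Set ℕ) (α : ℝ) (n : ℕ) : ℝ := aSum A α n / aSum Set.univ α n

lemma R_nonneg (A : Set ℕ) (α : ℝ) (n : ℕ) : 0 ≤ R A α n :=
  div_nonneg (aSum_nonneg A α n) (aSum_nonneg _ α n)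

lemma R_le_one (A : Set ℕ) (α : ℝ) (n : ℕ) : R A α n ≤ 1 :=
  div_le_one_of_le₀ (aSum_le_univ A α n) (aSum_nonneg _ α n)

lemma R_mem (A : Set ℕ) (α : ℝ) (n : ℕ) : R A α n ∈ Set.Icc (0:ℝ) 1 :=
  ⟨R_nonneg A α n, R_le_one A α n⟩

/-- Lower bound on the power sum: `n^(α+1) ≤ 2·4^α · ℕ_α(n)` for `n ≥ 2`. -/
lemma aSum_univ_lower (α : ℝ) (hα : 0 ≤ α) {n : ℕ} (hn : 2 ≤ n) :
    (n:ℝ) ^ (α + 1) ≤ 2 * (4:ℝ) ^ α * aSum Set.univ α n := by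
  set m := n / 2 with hm
  have hcard : (Finset.Ioc m n).card = n - m := by simp
  have hmn : m ≤ n := Nat.div_le_self n 2
  have h1 : ((n - m : ℕ) : ℝ) * ((m:ℝ) ^ α) ≤ aSum Set.univ α n := by
    rw [aSum_univ_eq]
    calc ((n - m : ℕ) : ℝ) * ((m:ℝ) ^ α) = ∑ _k ∈ Finset.Ioc m n, ((m:ℝ) ^ α) := by
          rw [Finset.sum_const, hcard, nsmul_eq_mul]
      _ ≤ ∑ k ∈ Finset.Ioc m n, (k:ℝ) ^ α := by
          refine Finset.sum_le_sum fun k hk => ?_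
          have := (Finset.mem_Ioc.mp hk).1
          exact Real.rpow_le_rpow (by positivity) (by exact_mod_cast this.le) hα
      _ ≤ ∑ k ∈ Finset.Icc 1 n, (k:ℝ) ^ α := by
          refine Finset.sum_le_sum_of_subset_of_nonneg ?_ (fun k hk _ => le_of_lt (rpow_pos hk α))
          intro k hk
          have h := Finset.mem_Ioc.mp hk
          exact Finset.mem_Icc.mpr ⟨Nat.one_le_iff_ne_zero.mpr (by omega), h.2⟩
  -- (n:ℝ) ≤ 2 * (n - m) and (n:ℝ) ≤ 4 * m
  have h2 : (n:ℝ) ≤ 2 * ((n - m : ℕ) : ℝ) := by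
    have : n ≤ 2 * (n - m) := by omega
    exact_mod_cast this
  have h3 : (n:ℝ) ≤ 4 * (m:ℝ) := by
    have : n ≤ 4 * m := by omega
    exact_mod_cast this
  have hn0 : (0:ℝ) < n := by positivity
  have hkey : (n:ℝ) ^ (α + 1) = (n:ℝ) ^ α * (n:ℝ) := by
    rw [Real.rpow_add hn0, Real.rpow_one]
  rw [hkey]
  have h4 : (n:ℝ) ^ α ≤ (4:ℝ) ^ α * (m:ℝ) ^ α := by
    rw [← Real.mul_rpow (by norm_num) (by positivity)]
    exact Real.rpow_le_rpow (le_of_lt hn0) h3 hα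
  calc (n:ℝ) ^ α * (n:ℝ) ≤ ((4:ℝ) ^ α * (m:ℝ) ^ α) * (2 * ((n - m : ℕ) : ℝ)) := by
        apply mul_le_mul h4 h2 (le_of_lt hn0) (by positivity)
    _ = 2 * (4:ℝ) ^ α * (((n - m : ℕ) : ℝ) * (m:ℝ) ^ α) := by ring
    _ ≤ 2 * (4:ℝ) ^ α * aSum Set.univ α n := by
        apply mul_le_mul_of_nonneg_left h1 (by positivity)

lemma sum_Icc_one_succ (f : ℕ → ℝ) (n : ℕ) :
    ∑ k ∈ Finset.Icc 1 (n + 1), f k = (∑ k ∈ Finset.Icc 1 n, f k) + f (n + 1) :=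
  Finset.sum_Icc_succ_top (Nat.le_add_left 1 n) f

lemma sum_Icc_pred (g : ℕ → ℝ) (hg0 : g 0 = 0) (n : ℕ) :
    ∑ k ∈ Finset.Icc 1 n, g k = (∑ k ∈ Finset.Icc 1 (n - 1), g k) + g n := by
  cases n with
  | zero => simp [hg0]
  | succ m => simpa using sum_Icc_one_succ g m

/-- Abel summation. -/
lemma abel (x w : ℕ → ℝ) (n : ℕ) :
    ∑ k ∈ Finset.Icc 1 n, x k * w k
      = (∑ k ∈ Finset.Icc 1 n, x k) * w n
        - ∑ k ∈ Finset.Icc 1 (n - 1), (∑ j ∈ Finset.Icc 1 k, x j) * (w (k + 1) - w k) := by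
  induction n with
  | zero => simp
  | succ m ih =>
    have h1 : ∑ k ∈ Finset.Icc 1 (m + 1 - 1), (∑ j ∈ Finset.Icc 1 k, x j) * (w (k + 1) - w k)
        = (∑ k ∈ Finset.Icc 1 (m - 1), (∑ j ∈ Finset.Icc 1 k, x j) * (w (k + 1) - w k))
          + (∑ j ∈ Finset.Icc 1 m, x j) * (w (m + 1) - w m) := by
      simpa using sum_Icc_pred (fun k => (∑ j ∈ Finset.Icc 1 k, x j) * (w (k + 1) - w k))
        (by simp) m
    rw [sum_Icc_one_succ (fun k => x k * w k), ih, h1, sum_Icc_one_succ x]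
    ring

lemma rpow_succ_sub_nonneg {γ : ℝ} (hγ : 0 ≤ γ) (k : ℕ) :
    0 ≤ ((k+1:ℕ):ℝ) ^ γ - (k:ℝ) ^ γ := by
  have : (k:ℝ) ^ γ ≤ ((k+1:ℕ):ℝ) ^ γ :=
    Real.rpow_le_rpow (by positivity) (by push_cast; linarith) hγ
  linarith

lemma aSum_univ_ge_n (α : ℝ) (hα : 0 ≤ α) (n : ℕ) : (n:ℝ) ≤ aSum Set.univ α n := by
  rw [aSum_univ_eq]
  calc (n:ℝ) = ∑ _k ∈ Finset.Icc 1 n, (1:ℝ) := by simp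
    _ ≤ ∑ k ∈ Finset.Icc 1 n, (k:ℝ) ^ α := by
        refine Finset.sum_le_sum fun k hk => ?_
        have h1 : (1:ℝ) ≤ (k:ℝ) := by exact_mod_cast (Finset.mem_Icc.mp hk).1
        exact Real.one_le_rpow h1 hα

lemma count_nonneg (A : Set ℕ) (n : ℕ) : 0 ≤ count A n :=
  Finset.sum_nonneg fun k _ => chiFun_nonneg A k

lemma count_le (A : Set ℕ) (n : ℕ) : count A n ≤ n := by
  calc count A n ≤ ∑ _k ∈ Finset.Icc 1 n, (1:ℝ) :=
        Finset.sum_le_sum fun k _ => chiFun_le_one A k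
    _ = n := by simp

/-- key identity via Abel summation -/
lemma key_identity (B : Set ℕ) (d α : ℝ) (n : ℕ) :
    aSum B α n - d * aSum Set.univ α n
      = (count B n - d * n) * (n:ℝ) ^ α
        - ∑ k ∈ Finset.Icc 1 (n - 1),
            (count B k - d * k) * (((k+1:ℕ):ℝ) ^ α - (k:ℝ) ^ α) := by
  have h := abel (fun k => chiFun B k - d) (fun k => (k:ℝ) ^ α) n
  have e1 : ∀ m : ℕ, ∑ j ∈ Finset.Icc 1 m, (chiFun B j - d) = count B m - d * m := by
    intro m
    rw [Finset.sum_sub_distrib, Finset.sum_const, Nat.card_Icc]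
    simp [count, mul_comm]
  have e2 : ∑ k ∈ Finset.Icc 1 n, (chiFun B k - d) * (k:ℝ) ^ α
      = aSum B α n - d * aSum Set.univ α n := by
    rw [aSum_univ_eq, aSum, Finset.mul_sum, ← Finset.sum_sub_distrib]
    exact Finset.sum_congr rfl fun k _ => by ring
  rw [← e2, h, e1]
  congr 1
  exact Finset.sum_congr rfl fun k _ => by rw [e1]

/-- `∑_{k≤n-1} k·Δk = n·n^α - ℕ_α(n)` -/
lemma sum_kDelta (α : ℝ) (n : ℕ) :
    ∑ k ∈ Finset.Icc 1 (n - 1), (k:ℝ) * (((k+1:ℕ):ℝ) ^ α - (k:ℝ) ^ α)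
      = (n:ℝ) * (n:ℝ) ^ α - aSum Set.univ α n := by
  have e1 : ∀ m : ℕ, ∑ _j ∈ Finset.Icc 1 m, (1:ℝ) = m := by intro m; simp
  have h := abel (fun _ => (1:ℝ)) (fun k => (k:ℝ) ^ α) n
  simp only [one_mul, e1] at h
  rw [aSum_univ_eq, h]
  ring

lemma sum_kDelta_le (α : ℝ) (hα : 0 ≤ α) {n : ℕ} (hn : 1 ≤ n) :
    ∑ k ∈ Finset.Icc 1 (n - 1), (k:ℝ) * (((k+1:ℕ):ℝ) ^ α - (k:ℝ) ^ α)
      ≤ (n:ℝ) ^ (α + 1) := by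
  rw [sum_kDelta]
  have : (n:ℝ) * (n:ℝ) ^ α = (n:ℝ) ^ (α+1) := by
    rw [Real.rpow_add (by exact_mod_cast hn : (0:ℝ) < n), Real.rpow_one]; ring
  rw [this]
  have := aSum_nonneg Set.univ α n
  linarith

/-- H2: a set with asymptotic density `d` has `α`-density `d` for every `α ≥ 0`. -/
lemma tendsto_R (B : Set ℕ) (d : ℝ) (hB : HasDensity B d) {α : ℝ} (hα : 0 ≤ α) :
    Tendsto (R B α) atTop (𝓝 d) := by
  have hB' : Tendsto (fun n : ℕ => count B n / n) atTop (𝓝 d) := hB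
  rw [Metric.tendsto_atTop]
  intro ε hε
  have h4 : (0:ℝ) < (4:ℝ) ^ α := by positivity
  set ε' : ℝ := ε / (8 * (2 * (4:ℝ) ^ α)) with hε'def
  have hε' : 0 < ε' := by positivity
  have hBe : ∃ K : ℕ, 1 ≤ K ∧ ∀ k ≥ K, |count B k - d * k| ≤ ε' * k := by
    rw [Metric.tendsto_atTop] at hB'
    obtain ⟨K0, hK0⟩ := hB' ε' hε'
    refine ⟨max K0 1, le_max_right _ _, fun k hk => ?_⟩
    have h1 : 1 ≤ k := le_trans (le_max_right _ _) hk
    have hkpos : (0:ℝ) < k := by exact_mod_cast h1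
    have := hK0 k (le_trans (le_max_left _ _) hk)
    rw [Real.dist_eq] at this
    have heq : count B k - d * k = (count B k / k - d) * k := by field_simp
    rw [heq, abs_mul, abs_of_pos hkpos]
    exact mul_le_mul_of_nonneg_right this.le hkpos.le
  obtain ⟨K, hK1, hK⟩ := hBe
  have huniv : ∀ k : ℕ, |count B k - d * k| ≤ (1 + |d|) * k := by
    intro k
    have h1 := count_nonneg B k
    have h2 := count_le B k
    have h3 : |count B k - d * k| ≤ |count B k| + |d * k| := abs_sub _ _
    rw [abs_of_nonneg h1, abs_mul, Nat.abs_cast] at h3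
    nlinarith [abs_nonneg d]
  set CK : ℝ := ∑ k ∈ Finset.Icc 1 K, (1 + |d|) * k * (((k+1:ℕ):ℝ) ^ α - (k:ℝ) ^ α) with hCK
  have hCK0 : 0 ≤ CK := Finset.sum_nonneg fun k _ => by
    have := rpow_succ_sub_nonneg hα k
    positivity
  have hmain : ∀ n : ℕ, K ≤ n → 2 ≤ n →
      |aSum B α n - d * aSum Set.univ α n| ≤ 2 * ε' * (n:ℝ) ^ (α + 1) + CK := by
    intro n hKn h2n
    rw [key_identity]
    have hterm1 : |(count B n - d * n) * (n:ℝ) ^ α| ≤ ε' * (n:ℝ) ^ (α+1) := by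
      rw [abs_mul, abs_of_nonneg (by positivity : (0:ℝ) ≤ (n:ℝ) ^ α)]
      have h5 := hK n hKn
      have hsplit : (n:ℝ) ^ (α+1) = (n:ℝ) * (n:ℝ) ^ α := by
        rw [Real.rpow_add (by positivity : (0:ℝ) < (n:ℝ)), Real.rpow_one]; ring
      rw [hsplit, ← mul_assoc]
      exact mul_le_mul_of_nonneg_right h5 (by positivity)
    have hterm2 : |∑ k ∈ Finset.Icc 1 (n - 1),
          (count B k - d * k) * (((k+1:ℕ):ℝ) ^ α - (k:ℝ) ^ α)|
        ≤ CK + ε' * (n:ℝ) ^ (α+1) := by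
      have habs : |∑ k ∈ Finset.Icc 1 (n - 1),
            (count B k - d * k) * (((k+1:ℕ):ℝ) ^ α - (k:ℝ) ^ α)|
          ≤ ∑ k ∈ Finset.Icc 1 (n - 1),
            |count B k - d * k| * (((k+1:ℕ):ℝ) ^ α - (k:ℝ) ^ α) := by
        refine le_trans (Finset.abs_sum_le_sum_abs _ _) (le_of_eq ?_)
        refine Finset.sum_congr rfl fun k _ => ?_
        rw [abs_mul, abs_of_nonneg (rpow_succ_sub_nonneg hα k)]
      refine le_trans habs ?_
      have hpt : ∀ k ∈ Finset.Icc 1 (n-1),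
          |count B k - d * k| * (((k+1:ℕ):ℝ) ^ α - (k:ℝ) ^ α)
            ≤ (if k ≤ K then (1 + |d|) * k * (((k+1:ℕ):ℝ) ^ α - (k:ℝ) ^ α) else 0)
              + ε' * ((k:ℝ) * (((k+1:ℕ):ℝ) ^ α - (k:ℝ) ^ α)) := by
        intro k _
        have hΔ := rpow_succ_sub_nonneg hα k
        by_cases hkK : k ≤ K
        · rw [if_pos hkK]
          have h1 : |count B k - d * k| * (((k+1:ℕ):ℝ) ^ α - (k:ℝ) ^ α)
              ≤ (1 + |d|) * k * (((k+1:ℕ):ℝ) ^ α - (k:ℝ) ^ α) :=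
            mul_le_mul_of_nonneg_right (huniv k) hΔ
          have h2 : 0 ≤ ε' * ((k:ℝ) * (((k+1:ℕ):ℝ) ^ α - (k:ℝ) ^ α)) := by positivity
          linarith
        · rw [if_neg hkK, zero_add]
          push_neg at hkK
          have h1 : |count B k - d * k| * (((k+1:ℕ):ℝ) ^ α - (k:ℝ) ^ α)
              ≤ ε' * k * (((k+1:ℕ):ℝ) ^ α - (k:ℝ) ^ α) :=
            mul_le_mul_of_nonneg_right (hK k hkK.le) hΔ
          calc |count B k - d * k| * (((k+1:ℕ):ℝ) ^ α - (k:ℝ) ^ α)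
              ≤ ε' * k * (((k+1:ℕ):ℝ) ^ α - (k:ℝ) ^ α) := h1
            _ = ε' * ((k:ℝ) * (((k+1:ℕ):ℝ) ^ α - (k:ℝ) ^ α)) := by ring
      refine le_trans (Finset.sum_le_sum hpt) ?_
      rw [Finset.sum_add_distrib]
      have hA2 : ∑ k ∈ Finset.Icc 1 (n-1),
          (if k ≤ K then (1 + |d|) * k * (((k+1:ℕ):ℝ) ^ α - (k:ℝ) ^ α) else 0) ≤ CK := by
        rw [← Finset.sum_filter]
        refine Finset.sum_le_sum_of_subset_of_nonneg ?_ ?_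
        · intro k hk
          simp only [Finset.mem_filter, Finset.mem_Icc] at hk ⊢
          omega
        · intro k _ _
          have := rpow_succ_sub_nonneg hα k
          positivity
      have hB2 : ∑ k ∈ Finset.Icc 1 (n-1),
          ε' * ((k:ℝ) * (((k+1:ℕ):ℝ) ^ α - (k:ℝ) ^ α)) ≤ ε' * (n:ℝ) ^ (α+1) := by
        rw [← Finset.mul_sum]
        exact mul_le_mul_of_nonneg_left (sum_kDelta_le α hα (by omega)) hε'.le
      linarith
    calc |(count B n - d * n) * (n:ℝ) ^ α
          - ∑ k ∈ Finset.Icc 1 (n - 1),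
              (count B k - d * k) * (((k+1:ℕ):ℝ) ^ α - (k:ℝ) ^ α)|
        ≤ |(count B n - d * n) * (n:ℝ) ^ α|
          + |∑ k ∈ Finset.Icc 1 (n - 1),
              (count B k - d * k) * (((k+1:ℕ):ℝ) ^ α - (k:ℝ) ^ α)| := abs_sub _ _
      _ ≤ ε' * (n:ℝ) ^ (α+1) + (CK + ε' * (n:ℝ) ^ (α+1)) := add_le_add hterm1 hterm2
      _ = 2 * ε' * (n:ℝ) ^ (α + 1) + CK := by ring
  obtain ⟨M, hM⟩ := exists_nat_gt (2 * CK / ε)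
  refine ⟨max (max K 2) M, fun n hn => ?_⟩
  have hKn : K ≤ n := le_trans (le_trans (le_max_left _ _) (le_max_left _ _)) hn
  have h2n : 2 ≤ n := le_trans (le_trans (le_max_right _ _) (le_max_left _ _)) hn
  have hMn : M ≤ n := le_trans (le_max_right _ _) hn
  have hNpos : 0 < aSum Set.univ α n := aSum_univ_pos α (by omega)
  have hnpos : (0:ℝ) < n := by exact_mod_cast (by omega : 0 < n)
  rw [Real.dist_eq]
  have hRd : R B α n - d = (aSum B α n - d * aSum Set.univ α n) / aSum Set.univ α n := by
    rw [R]; field_simp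
  rw [hRd, abs_div, abs_of_pos hNpos]
  have hXN : (n:ℝ)^(α+1) / aSum Set.univ α n ≤ 2*(4:ℝ)^α := by
    rw [div_le_iff₀ hNpos]; exact aSum_univ_lower α hα h2n
  have hCKn : CK / aSum Set.univ α n ≤ CK / (n:ℝ) := by
    gcongr
    exact aSum_univ_ge_n α hα n
  have hMn' : (M:ℝ) ≤ (n:ℝ) := by exact_mod_cast hMn
  have hCKn2 : CK / (n:ℝ) < ε/2 := by
    rw [div_lt_iff₀ hnpos]
    have he : 2*CK/ε < (n:ℝ) := lt_of_lt_of_le hM hMn'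
    have h2CK : 2*CK < (n:ℝ)*ε := by
      calc 2*CK = (2*CK/ε)*ε := by field_simp
        _ < (n:ℝ)*ε := mul_lt_mul_of_pos_right he hε
    linarith
  have e4 : 2*ε'*(2*(4:ℝ)^α) = ε/4 := by
    rw [hε'def]; field_simp; ring
  calc |aSum B α n - d * aSum Set.univ α n| / aSum Set.univ α n
      ≤ (2 * ε' * (n:ℝ) ^ (α + 1) + CK) / aSum Set.univ α n := by
        gcongr
        exact hmain n hKn h2n
    _ = 2 * ε' * ((n:ℝ) ^ (α + 1) / aSum Set.univ α n) + CK / aSum Set.univ α n := by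
        ring
    _ ≤ 2 * ε' * (2*(4:ℝ)^α) + CK / (n:ℝ) :=
        add_le_add (mul_le_mul_of_nonneg_left hXN (by positivity)) hCKn
    _ < ε := by rw [e4]; linarith

lemma aSum_univ_le (α : ℝ) (hα : 0 ≤ α) (n : ℕ) :
    aSum Set.univ α n ≤ (n:ℝ) * (n:ℝ) ^ α := by
  rw [aSum_univ_eq]
  calc ∑ k ∈ Finset.Icc 1 n, (k:ℝ) ^ α ≤ ∑ _k ∈ Finset.Icc 1 n, (n:ℝ) ^ α := by
        refine Finset.sum_le_sum fun k hk => ?_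
        exact Real.rpow_le_rpow (by positivity)
          (by exact_mod_cast (Finset.mem_Icc.mp hk).2) hα
    _ = (n:ℝ) * (n:ℝ) ^ α := by simp [Finset.sum_const, Nat.card_Icc, mul_comm]

/-- abel applied to a weighted sum, splitting `k^β = k^α · k^(β-α)`. -/
lemma abel_beta (A : Set ℕ) {α β : ℝ} (hαβ : α ≤ β) (n : ℕ) :
    aSum A β n = aSum A α n * (n:ℝ) ^ (β - α)
      - ∑ k ∈ Finset.Icc 1 (n - 1),
          aSum A α k * (((k+1:ℕ):ℝ) ^ (β - α) - (k:ℝ) ^ (β - α)) := by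
  have h := abel (fun k => chiFun A k * (k:ℝ) ^ α) (fun k => (k:ℝ) ^ (β - α)) n
  have e : ∑ k ∈ Finset.Icc 1 n, (chiFun A k * (k:ℝ) ^ α) * (k:ℝ) ^ (β - α)
      = aSum A β n := by
    refine Finset.sum_congr rfl fun k hk => ?_
    have hk1 : (0:ℝ) < k := by exact_mod_cast (Finset.mem_Icc.mp hk).1
    rw [mul_assoc, ← Real.rpow_add hk1]
    ring_nf
  rw [← e, h]
  rfl

/-- Key identity: for `n ≥ 1`,
`A_β(n) = R_α(n)·ℕ_β(n) + Σ (R_α(n) - R_α(k))·ℕ_α(k)·Δ_k`. -/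
lemma key2 (A : Set ℕ) {α β : ℝ} (hαβ : α ≤ β) {n : ℕ} (hn : 1 ≤ n) :
    aSum A β n = R A α n * aSum Set.univ β n
      + ∑ k ∈ Finset.Icc 1 (n - 1),
          (R A α n - R A α k) * aSum Set.univ α k
            * (((k+1:ℕ):ℝ) ^ (β - α) - (k:ℝ) ^ (β - α)) := by
  have hTn : aSum Set.univ α n ≠ 0 := ne_of_gt (aSum_univ_pos α hn)
  have hSn : R A α n * aSum Set.univ α n = aSum A α n := by
    rw [R, div_mul_cancel₀ _ hTn]
  have h1 := abel_beta A hαβ n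
  have h2 := abel_beta Set.univ hαβ n
  rw [h1, h2]
  have hsum : ∑ k ∈ Finset.Icc 1 (n - 1),
        (R A α n - R A α k) * aSum Set.univ α k
          * (((k+1:ℕ):ℝ) ^ (β - α) - (k:ℝ) ^ (β - α))
      = R A α n * ∑ k ∈ Finset.Icc 1 (n - 1),
            aSum Set.univ α k * (((k+1:ℕ):ℝ) ^ (β - α) - (k:ℝ) ^ (β - α))
        - ∑ k ∈ Finset.Icc 1 (n - 1),
            aSum A α k * (((k+1:ℕ):ℝ) ^ (β - α) - (k:ℝ) ^ (β - α)) := by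
    rw [Finset.mul_sum, ← Finset.sum_sub_distrib]
    refine Finset.sum_congr rfl fun k hk => ?_
    have hk1 : 1 ≤ k := (Finset.mem_Icc.mp hk).1
    have hTk : aSum Set.univ α k ≠ 0 := ne_of_gt (aSum_univ_pos α hk1)
    have hSk : R A α k * aSum Set.univ α k = aSum A α k := by
      rw [R, div_mul_cancel₀ _ hTk]
    calc (R A α n - R A α k) * aSum Set.univ α k
          * (((k+1:ℕ):ℝ) ^ (β - α) - (k:ℝ) ^ (β - α))
        = R A α n * (aSum Set.univ α k * (((k+1:ℕ):ℝ) ^ (β - α) - (k:ℝ) ^ (β - α)))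
          - (R A α k * aSum Set.univ α k) * (((k+1:ℕ):ℝ) ^ (β - α) - (k:ℝ) ^ (β - α)) := by
          ring
      _ = R A α n * (aSum Set.univ α k * (((k+1:ℕ):ℝ) ^ (β - α) - (k:ℝ) ^ (β - α)))
          - aSum A α k * (((k+1:ℕ):ℝ) ^ (β - α) - (k:ℝ) ^ (β - α)) := by rw [hSk]
  rw [hsum]
  linear_combination (-(n:ℝ) ^ (β - α)) * hSn


lemma R_bddU (A : Set ℕ) (α : ℝ) : IsBoundedUnder (· ≤ ·) (atTop : Filter ℕ) (R A α) :=
  isBoundedUnder_of ⟨1, fun n => R_le_one A α n⟩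

lemma R_bddL (A : Set ℕ) (α : ℝ) : IsBoundedUnder (· ≥ ·) (atTop : Filter ℕ) (R A α) :=
  isBoundedUnder_of ⟨0, fun n => R_nonneg A α n⟩

lemma upperADens_eq (A : Set ℕ) (α : ℝ) : upperADens A α = limsup (R A α) atTop := rfl

/-- H1: monotonicity of the upper α-density in α (for α ≥ 0). -/
lemma upperADens_mono (A : Set ℕ) {α β : ℝ} (hα : 0 ≤ α) (hαβ : α ≤ β) :
    upperADens A α ≤ upperADens A β := by
  have hβ : 0 ≤ β := le_trans hα hαβ
  have hγ : 0 ≤ β - α := by linarith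
  rw [upperADens_eq, upperADens_eq]
  set L := limsup (R A α) atTop with hL
  set c : ℝ := 2 + 4 * (4:ℝ) ^ β with hc
  have hcpos : 0 < c := by positivity
  -- main claim
  have claim : ∀ ε : ℝ, 0 < ε → L - c * ε ≤ limsup (R A β) atTop := by
    intro ε hε
    -- eventually R A α k < L + ε
    have hev : ∀ᶠ k in atTop, R A α k < L + ε :=
      eventually_lt_of_limsup_lt (by linarith [hL]) (R_bddU A α)
    obtain ⟨K0, hK0⟩ := eventually_atTop.mp hev
    set K := max K0 1 with hKdef
    have hK : ∀ k ≥ K, R A α k < L + ε := fun k hk => hK0 k (le_trans (le_max_left _ _) hk)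
    set CK : ℝ := ∑ k ∈ Finset.Icc 1 K,
        aSum Set.univ α k * (((k+1:ℕ):ℝ) ^ (β - α) - (k:ℝ) ^ (β - α)) with hCKdef
    have hCK0 : 0 ≤ CK := Finset.sum_nonneg fun k _ =>
      mul_nonneg (aSum_nonneg _ _ _) (rpow_succ_sub_nonneg hγ k)
    obtain ⟨M, hM⟩ := exists_nat_gt (CK / ε)
    -- frequently L - ε < R A α n and n large
    have hfreq : ∃ᶠ n in atTop, L - ε < R A α n :=
      frequently_lt_of_lt_limsup ((R_bddL A α).isCoboundedUnder_le) (by linarith [hL])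
    have hfreq2 : ∃ᶠ n in atTop, (L - ε < R A α n ∧ n ≥ max (max (K+1) 2) M) :=
      hfreq.and_eventually (eventually_ge_atTop _)
    -- for such n, L - c ε ≤ R A β n
    have hbound : ∀ n : ℕ, L - ε < R A α n → n ≥ max (max (K+1) 2) M →
        L - c * ε ≤ R A β n := by
      intro n hrn hn
      have hKn : K + 1 ≤ n := le_trans (le_trans (le_max_left _ _) (le_max_left _ _)) hn
      have h2n : 2 ≤ n := le_trans (le_trans (le_max_right _ _) (le_max_left _ _)) hn
      have hMn : M ≤ n := le_trans (le_max_right _ _) hn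
      have hn1 : 1 ≤ n := by omega
      have hNβ : 0 < aSum Set.univ β n := aSum_univ_pos β hn1
      have hNα : 0 < aSum Set.univ α n := aSum_univ_pos α hn1
      have hnR : (0:ℝ) < n := by exact_mod_cast (by omega : 0 < n)
      -- sum of T k Δ k over Icc 1 (n-1)
      have hTD : ∑ k ∈ Finset.Icc 1 (n - 1),
            aSum Set.univ α k * (((k+1:ℕ):ℝ) ^ (β - α) - (k:ℝ) ^ (β - α))
          = aSum Set.univ α n * (n:ℝ) ^ (β - α) - aSum Set.univ β n := by
        have := abel_beta Set.univ hαβ n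
        linarith [this]
      have hTDle : ∑ k ∈ Finset.Icc 1 (n - 1),
            aSum Set.univ α k * (((k+1:ℕ):ℝ) ^ (β - α) - (k:ℝ) ^ (β - α))
          ≤ 2 * (4:ℝ) ^ β * aSum Set.univ β n := by
        rw [hTD]
        have h1 : aSum Set.univ α n * (n:ℝ) ^ (β - α) ≤ (n:ℝ) ^ (β + 1) := by
          calc aSum Set.univ α n * (n:ℝ) ^ (β - α)
              ≤ ((n:ℝ) * (n:ℝ) ^ α) * (n:ℝ) ^ (β - α) :=
                mul_le_mul_of_nonneg_right (aSum_univ_le α hα n) (by positivity)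
            _ = (n:ℝ) ^ (β + 1) := by
                rw [mul_assoc, ← Real.rpow_add hnR, Real.rpow_add hnR β 1, Real.rpow_one]
                ring_nf
        have h2 : (n:ℝ) ^ (β + 1) ≤ 2 * (4:ℝ) ^ β * aSum Set.univ β n :=
          aSum_univ_lower β hβ h2n
        linarith [hNβ]
      -- key identity
      have hid := key2 A hαβ hn1
      -- lower bound the correction sum
      have hQ : ∑ k ∈ Finset.Icc 1 (n - 1),
            (R A α n - R A α k) * aSum Set.univ α k
              * (((k+1:ℕ):ℝ) ^ (β - α) - (k:ℝ) ^ (β - α))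
          ≥ - CK - 2 * ε * (2 * (4:ℝ) ^ β * aSum Set.univ β n) := by
        have hpt : ∀ k ∈ Finset.Icc 1 (n - 1),
            -(if k ≤ K then aSum Set.univ α k
                  * (((k+1:ℕ):ℝ) ^ (β - α) - (k:ℝ) ^ (β - α)) else 0)
              - 2 * ε * (aSum Set.univ α k
                  * (((k+1:ℕ):ℝ) ^ (β - α) - (k:ℝ) ^ (β - α)))
            ≤ (R A α n - R A α k) * aSum Set.univ α k
                * (((k+1:ℕ):ℝ) ^ (β - α) - (k:ℝ) ^ (β - α)) := by
          intro k _
          have hTΔ : 0 ≤ aSum Set.univ α k * (((k+1:ℕ):ℝ) ^ (β - α) - (k:ℝ) ^ (β - α)) :=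
            mul_nonneg (aSum_nonneg _ _ _) (rpow_succ_sub_nonneg hγ k)
          by_cases hkK : k ≤ K
          · rw [if_pos hkK]
            have h1 : R A α n - R A α k ≥ -1 := by
              have := R_nonneg A α n; have := R_le_one A α k; linarith
            nlinarith [hTΔ, hε]
          · rw [if_neg hkK]
            push_neg at hkK
            have h1 : R A α k < L + ε := hK k hkK.le
            have h2 : R A α n - R A α k ≥ -(2*ε) := by linarith
            nlinarith [hTΔ]
        have hsum := Finset.sum_le_sum hpt
        rw [Finset.sum_sub_distrib] at hsum
        have hA2 : ∑ k ∈ Finset.Icc 1 (n-1),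
            (if k ≤ K then aSum Set.univ α k
                * (((k+1:ℕ):ℝ) ^ (β - α) - (k:ℝ) ^ (β - α)) else 0) ≤ CK := by
          rw [← Finset.sum_filter]
          refine Finset.sum_le_sum_of_subset_of_nonneg ?_ ?_
          · intro k hk
            simp only [Finset.mem_filter, Finset.mem_Icc] at hk ⊢
            omega
          · intro k _ _
            exact mul_nonneg (aSum_nonneg _ _ _) (rpow_succ_sub_nonneg hγ k)
        have hB2 : ∑ k ∈ Finset.Icc 1 (n-1),
            2 * ε * (aSum Set.univ α k * (((k+1:ℕ):ℝ) ^ (β - α) - (k:ℝ) ^ (β - α)))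
            ≤ 2 * ε * (2 * (4:ℝ) ^ β * aSum Set.univ β n) := by
          rw [← Finset.mul_sum]
          exact mul_le_mul_of_nonneg_left hTDle (by linarith)
        have hneg : ∑ k ∈ Finset.Icc 1 (n-1),
            -(if k ≤ K then aSum Set.univ α k
                * (((k+1:ℕ):ℝ) ^ (β - α) - (k:ℝ) ^ (β - α)) else 0)
            = -∑ k ∈ Finset.Icc 1 (n-1),
            (if k ≤ K then aSum Set.univ α k
                * (((k+1:ℕ):ℝ) ^ (β - α) - (k:ℝ) ^ (β - α)) else 0) :=
          Finset.sum_neg_distrib _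
        rw [hneg] at hsum
        linarith [hsum, hA2, hB2]
      -- conclude
      set Q := ∑ k ∈ Finset.Icc 1 (n - 1),
          (R A α n - R A α k) * aSum Set.univ α k
            * (((k+1:ℕ):ℝ) ^ (β - α) - (k:ℝ) ^ (β - α)) with hQdef
      have hRβ : R A β n = R A α n + Q / aSum Set.univ β n := by
        have h0 : R A β n = (R A α n * aSum Set.univ β n + Q) / aSum Set.univ β n := by
          rw [R, hid]
        rw [h0, add_div, mul_div_cancel_right₀ _ (ne_of_gt hNβ)]
      have hdiv : Q / aSum Set.univ β n
          ≥ (- CK - 2 * ε * (2 * (4:ℝ) ^ β * aSum Set.univ β n)) / aSum Set.univ β n := by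
        gcongr
      have he : (- CK - 2 * ε * (2 * (4:ℝ) ^ β * aSum Set.univ β n)) / aSum Set.univ β n
          = -(CK / aSum Set.univ β n) - 4 * ε * (4:ℝ) ^ β := by
        field_simp
        ring
      have hCKN : CK / aSum Set.univ β n ≤ CK / (n:ℝ) := by
        gcongr
        exact aSum_univ_ge_n β hβ n
      have hMn' : (M:ℝ) ≤ (n:ℝ) := by exact_mod_cast hMn
      have hCKn2 : CK / (n:ℝ) < ε := by
        rw [div_lt_iff₀ hnR]
        have he2 : CK / ε < (n:ℝ) := lt_of_lt_of_le hM hMn'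
        calc CK = (CK/ε)*ε := by field_simp
          _ < (n:ℝ)*ε := mul_lt_mul_of_pos_right he2 hε
          _ = ε * n := by ring
      rw [hRβ, hc]
      rw [he] at hdiv
      linarith [hdiv, hrn, hCKN, hCKn2]
    -- from frequently, conclude
    have hfreq3 : ∃ᶠ n in atTop, L - c * ε ≤ R A β n :=
      hfreq2.mono fun n hn => hbound n hn.1 hn.2
    exact le_limsup_of_frequently_le hfreq3 (R_bddU A β)
  refine le_of_forall_pos_le_add fun ε' hε' => ?_
  have h5 := claim (ε' / c) (by positivity)
  have hcc : c * (ε' / c) = ε' := by field_simp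
  linarith [h5, hcc]

/-- An ultrafilter finer than `atTop` along which `x` converges to `L`,
provided `x` is frequently near `L`. -/
lemma exists_ultrafilter_tendsto (x : ℕ → ℝ) (L : ℝ)
    (hfreq : ∀ ε : ℝ, 0 < ε → ∃ᶠ n in atTop, |x n - L| < ε) :
    ∃ F : Ultrafilter ℕ, (F : Filter ℕ) ≤ atTop ∧ Tendsto x (F : Filter ℕ) (𝓝 L) := by
  have hne : (atTop ⊓ comap x (𝓝 L)).NeBot := by
    rw [Filter.inf_neBot_iff]
    intro s hs t ht
    obtain ⟨U, hU, hUt⟩ := Filter.mem_comap.mp ht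
    obtain ⟨ε, hε, hball⟩ := Metric.mem_nhds_iff.mp hU
    have hs' : ∀ᶠ n in atTop, n ∈ s := hs
    obtain ⟨n, hn1, hn2⟩ := ((hfreq ε hε).and_eventually hs').exists
    refine ⟨n, hn2, hUt ?_⟩
    exact hball (by simpa [Metric.mem_ball, Real.dist_eq] using hn1)
  refine ⟨Ultrafilter.of (atTop ⊓ comap x (𝓝 L)), ?_, ?_⟩
  · exact le_trans (Ultrafilter.of_le _) inf_le_left
  · have h1 : (Ultrafilter.of (atTop ⊓ comap x (𝓝 L)) : Filter ℕ) ≤ comap x (𝓝 L) :=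
      le_trans (Ultrafilter.of_le _) inf_le_right
    calc map x (Ultrafilter.of (atTop ⊓ comap x (𝓝 L)) : Filter ℕ)
        ≤ map x (comap x (𝓝 L)) := map_mono h1
      _ ≤ 𝓝 L := map_comap_le
lemma exists_ultrafilter_tendsto_limsup (A : Set ℕ) (α : ℝ) :
    ∃ F : Ultrafilter ℕ, (F : Filter ℕ) ≤ atTop ∧
      Tendsto (R A α) (F : Filter ℕ) (𝓝 (limsup (R A α) atTop)) := by
  apply exists_ultrafilter_tendsto
  intro ε hε
  set L := limsup (R A α) atTop
  have f1 : ∃ᶠ n in atTop, L - ε < R A α n :=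
    frequently_lt_of_lt_limsup ((R_bddL A α).isCoboundedUnder_le) (sub_lt_self L hε)
  have f2 : ∀ᶠ n in atTop, R A α n < L + ε :=
    eventually_lt_of_limsup_lt (lt_add_of_pos_right L hε) (R_bddU A α)
  exact (f1.and_eventually f2).mono fun n hn => abs_sub_lt_iff.mpr ⟨by linarith [hn.2], by linarith [hn.1]⟩

lemma exists_ultrafilter_tendsto_liminf (A : Set ℕ) (α : ℝ) :
    ∃ F : Ultrafilter ℕ, (F : Filter ℕ) ≤ atTop ∧
      Tendsto (R A α) (F : Filter ℕ) (𝓝 (liminf (R A α) atTop)) := by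
  apply exists_ultrafilter_tendsto
  intro ε hε
  set L := liminf (R A α) atTop
  have f1 : ∃ᶠ n in atTop, R A α n < L + ε :=
    frequently_lt_of_liminf_lt ((R_bddU A α).isCoboundedUnder_ge) (lt_add_of_pos_right L hε)
  have f2 : ∀ᶠ n in atTop, L - ε < R A α n :=
    eventually_lt_of_lt_liminf (sub_lt_self L hε) (R_bddL A α)
  exact (f1.and_eventually f2).mono fun n hn => abs_sub_lt_iff.mpr ⟨by linarith [hn.2], by linarith [hn.1]⟩

/-- The density measure associated to an ultrafilter and an exponent. -/
def muOf (F : Ultrafilter ℕ) (α : ℝ) : Set ℕ → ℝ := fun B => limUnder (F : Filter ℕ) (R B α)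

lemma muOf_tendsto (F : Ultrafilter ℕ) (α : ℝ) (B : Set ℕ) :
    Tendsto (R B α) (F : Filter ℕ) (𝓝 (muOf F α B)) ∧ muOf F α B ∈ Set.Icc (0:ℝ) 1 := by
  obtain ⟨a, ha, hle⟩ := (isCompact_Icc (a := (0:ℝ)) (b := 1)).ultrafilter_le_nhds
    (F.map (R B α)) (by
      rw [le_principal_iff, Ultrafilter.mem_coe, Ultrafilter.mem_map]
      exact Filter.univ_mem' fun n => R_mem B α n)
  have ht : Tendsto (R B α) (F : Filter ℕ) (𝓝 a) := by
    rwa [Ultrafilter.coe_map] at hle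
  have heq : muOf F α B = a := ht.limUnder_eq
  rw [heq]
  exact ⟨ht, ha⟩

lemma chiFun_union {A B : Set ℕ} (h : Disjoint A B) (k : ℕ) :
    chiFun (A ∪ B) k = chiFun A k + chiFun B k := by
  rw [chiFun, Set.indicator_union_of_disjoint h]
  rfl

lemma muOf_isDensityMeasure (F : Ultrafilter ℕ) (hF : (F : Filter ℕ) ≤ atTop)
    {α : ℝ} (hα : 0 ≤ α) : IsDensityMeasure (muOf F α) := by
  refine ⟨?_, fun B => (muOf_tendsto F α B).2, ?_, ?_⟩
  · intro A B hAB
    have hpt : ∀ n, R (A ∪ B) α n = R A α n + R B α n := by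
      intro n
      rw [R, R, R, ← add_div]
      congr 1
      rw [aSum, aSum, aSum, ← Finset.sum_add_distrib]
      exact Finset.sum_congr rfl fun k _ => by rw [chiFun_union hAB]; ring
    have h1 := (muOf_tendsto F α A).1
    have h2 := (muOf_tendsto F α B).1
    have h3 : Tendsto (R (A ∪ B) α) (F : Filter ℕ) (𝓝 (muOf F α A + muOf F α B)) :=
      (h1.add h2).congr fun n => (hpt n).symm
    exact h3.limUnder_eq
  · have hev : ∀ᶠ n in (F : Filter ℕ), R Set.univ α n = 1 := by
      apply hF
      filter_upwards [eventually_ge_atTop 1] with n hn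
      rw [R, div_self (ne_of_gt (aSum_univ_pos α hn))]
    have h3 : Tendsto (R Set.univ α) (F : Filter ℕ) (𝓝 1) :=
      Tendsto.congr' (EventuallyEq.symm (hev : R Set.univ α =ᶠ[(F : Filter ℕ)] fun _ => 1))
        tendsto_const_nhds
    exact h3.limUnder_eq
  · intro B d hBd
    exact ((tendsto_R B d hBd hα).mono_left hF).limUnder_eq


lemma aSum_compl (A : Set ℕ) (α : ℝ) (n : ℕ) :
    aSum A α n + aSum Aᶜ α n = aSum Set.univ α n := by
  rw [aSum, aSum, aSum, ← Finset.sum_add_distrib]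
  refine Finset.sum_congr rfl fun k _ => ?_
  have h : chiFun A k + chiFun Aᶜ k = 1 := by
    by_cases h : k ∈ A <;> simp [chiFun, Set.indicator, h]
  rw [← add_mul, h, chiFun_univ, one_mul]

lemma R_compl (A : Set ℕ) (α : ℝ) {n : ℕ} (hn : 1 ≤ n) : R A α n = 1 - R Aᶜ α n := by
  have hN := aSum_univ_pos α hn
  rw [R, R, eq_sub_iff_add_eq, ← add_div, aSum_compl, div_self (ne_of_gt hN)]

lemma lowerADens_eq_compl (A : Set ℕ) (α : ℝ) :
    lowerADens A α = 1 - upperADens Aᶜ α := by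
  have hev : (R A α) =ᶠ[atTop] (fun n => 1 - R Aᶜ α n) := by
    filter_upwards [eventually_ge_atTop 1] with n hn
    exact R_compl A α hn
  have h1 : lowerADens A α = liminf (fun n => 1 - R Aᶜ α n) atTop := liminf_congr hev
  rw [h1, upperADens_eq]
  exact liminf_const_sub atTop (R Aᶜ α) 1 (R_bddU Aᶜ α) ((R_bddL Aᶜ α).isCoboundedUnder_le)

lemma upperADens_le_one (A : Set ℕ) (α : ℝ) : upperADens A α ≤ 1 := by
  rw [upperADens_eq]
  exact limsup_le_of_le ((R_bddL A α).isCoboundedUnder_le)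
    (Eventually.of_forall (R_le_one A α))

lemma lowerADens_le_upperADens (A : Set ℕ) (α : ℝ) :
    lowerADens A α ≤ upperADens A α :=
  liminf_le_limsup (R_bddU A α) (R_bddL A α)

lemma tendsto_upperADens (A : Set ℕ) :
    Tendsto (upperADens A) atTop (𝓝 (sSup (upperADens A '' Set.Ici 0))) := by
  set S := upperADens A '' Set.Ici 0 with hS
  have hSne : S.Nonempty := ⟨upperADens A 0, 0, Set.self_mem_Ici, rfl⟩
  have hSbdd : BddAbove S := ⟨1, by rintro r ⟨a, _, rfl⟩; exact upperADens_le_one A a⟩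
  rw [Metric.tendsto_atTop]
  intro ε hε
  obtain ⟨r, hrS, hr⟩ := exists_lt_of_lt_csSup hSne (sub_lt_self (sSup S) hε)
  obtain ⟨α₀, hα₀, rfl⟩ := hrS
  refine ⟨α₀, fun α hα => ?_⟩
  have hα0 : (0:ℝ) ≤ α := le_trans hα₀ hα
  have h1 : upperADens A α₀ ≤ upperADens A α := upperADens_mono A hα₀ hα
  have h2 : upperADens A α ≤ sSup S := le_csSup hSbdd ⟨α, hα0, rfl⟩
  rw [Real.dist_eq, abs_lt]
  constructor <;> linarith

lemma tendsto_lowerADens (A : Set ℕ) :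
    Tendsto (lowerADens A) atTop (𝓝 (1 - sSup (upperADens Aᶜ '' Set.Ici 0))) := by
  have h := (tendsto_upperADens Aᶜ).const_sub 1
  have he : lowerADens A = fun α => 1 - upperADens Aᶜ α := funext (lowerADens_eq_compl A)
  rw [he]
  exact h

lemma exists_DM_upper (A : Set ℕ) {α : ℝ} (hα : 0 ≤ α) :
    ∃ μ, IsDensityMeasure μ ∧ μ A = upperADens A α := by
  obtain ⟨F, hF, hT⟩ := exists_ultrafilter_tendsto_limsup A α
  refine ⟨muOf F α, muOf_isDensityMeasure F hF hα, ?_⟩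
  rw [upperADens_eq]
  exact tendsto_nhds_unique (muOf_tendsto F α A).1 hT

lemma exists_DM_lower (A : Set ℕ) {α : ℝ} (hα : 0 ≤ α) :
    ∃ μ, IsDensityMeasure μ ∧ μ A = lowerADens A α := by
  obtain ⟨F, hF, hT⟩ := exists_ultrafilter_tendsto_liminf A α
  refine ⟨muOf F α, muOf_isDensityMeasure F hF hα, ?_⟩
  exact tendsto_nhds_unique (muOf_tendsto F α A).1 hT

end Stmt5Aux

open Stmt5Aux

/-- For every `A ⊆ ℕ`, `0 ≤ λ̲(A) ≤ d̲_∞(A) ≤ d̄_∞(A) ≤ λ̄(A) ≤ 1`. -/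
theorem stmt5 (A : Set ℕ) :
    0 ≤ lamLower A ∧ lamLower A ≤ dInftyLower A ∧ dInftyLower A ≤ dInftyUpper A ∧
      dInftyUpper A ≤ lamUpper A ∧ lamUpper A ≤ 1 := by
  have hub : ∀ r ∈ {r | ∃ μ, IsDensityMeasure μ ∧ μ A = r}, r ≤ 1 := by
    rintro r ⟨μ, hμ, rfl⟩
    exact (hμ.2.1 A).2
  have hlb : ∀ r ∈ {r | ∃ μ, IsDensityMeasure μ ∧ μ A = r}, 0 ≤ r := by
    rintro r ⟨μ, hμ, rfl⟩
    exact (hμ.2.1 A).1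
  have hbddA : BddAbove {r | ∃ μ, IsDensityMeasure μ ∧ μ A = r} := ⟨1, hub⟩
  have hbddB : BddBelow {r | ∃ μ, IsDensityMeasure μ ∧ μ A = r} := ⟨0, hlb⟩
  have hdu : dInftyUpper A = sSup (upperADens A '' Set.Ici 0) :=
    (Stmt5Aux.tendsto_upperADens A).limUnder_eq
  have hdl : dInftyLower A = 1 - sSup (upperADens Aᶜ '' Set.Ici 0) :=
    (Stmt5Aux.tendsto_lowerADens A).limUnder_eq
  refine ⟨?_, ?_, ?_, ?_, ?_⟩
  · exact Real.sInf_nonneg hlb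
  · rw [lamLower, dInftyLower]
    rw [(Stmt5Aux.tendsto_lowerADens A).limUnder_eq]
    refine ge_of_tendsto (Stmt5Aux.tendsto_lowerADens A) ?_
    filter_upwards [eventually_ge_atTop (0:ℝ)] with α hα
    obtain ⟨μ, hμ, hμA⟩ := Stmt5Aux.exists_DM_lower A hα
    exact csInf_le hbddB ⟨μ, hμ, hμA⟩
  · rw [dInftyLower, dInftyUpper,
      (Stmt5Aux.tendsto_lowerADens A).limUnder_eq,
      (Stmt5Aux.tendsto_upperADens A).limUnder_eq]
    exact le_of_tendsto_of_tendsto' (Stmt5Aux.tendsto_lowerADens A)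
      (Stmt5Aux.tendsto_upperADens A) (fun α => Stmt5Aux.lowerADens_le_upperADens A α)
  · rw [dInftyUpper, (Stmt5Aux.tendsto_upperADens A).limUnder_eq, lamUpper]
    refine le_of_tendsto (Stmt5Aux.tendsto_upperADens A) ?_
    filter_upwards [eventually_ge_atTop (0:ℝ)] with α hα
    obtain ⟨μ, hμ, hμA⟩ := Stmt5Aux.exists_DM_upper A hα
    exact le_csSup hbddA ⟨μ, hμ, hμA⟩
  · exact Real.sSup_le hub zero_le_one
end
end

section
/- For every B ⊆ ℕ there exists a subset A ⊆ B such that A has asymptotic density and d(A) = λ̲(B). -/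
open Filter Topology

noncomputable section

open Classical in
/-- number of elements of `X` in `(m, n]`. -/
def cntIoc (X : Set ℕ) (m n : ℕ) : ℕ := ((Finset.Ioc m n).filter (· ∈ X)).card

def cnt (X : Set ℕ) (n : ℕ) : ℕ := cntIoc X 0 n

open Classical in
lemma cntIoc_split (X : Set ℕ) {a b c : ℕ} (hab : a ≤ b) (hbc : b ≤ c) :
    cntIoc X a c = cntIoc X a b + cntIoc X b c := by
  unfold cntIoc
  rw [← Finset.card_union_of_disjoint, ← Finset.filter_union,
    Finset.Ioc_union_Ioc_eq_Ioc hab hbc]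
  refine Finset.disjoint_filter_filter ?_
  rw [Finset.disjoint_left]
  intro x hx hy
  simp only [Finset.mem_Ioc] at hx hy
  omega

open Classical in
lemma cnt_split (X : Set ℕ) {m n : ℕ} (h : m ≤ n) : cnt X n = cnt X m + cntIoc X m n := by
  unfold cnt cntIoc
  rw [← Finset.card_union_of_disjoint, ← Finset.filter_union,
    Finset.Ioc_union_Ioc_eq_Ioc (Nat.zero_le m) h]
  refine Finset.disjoint_filter_filter ?_
  rw [Finset.disjoint_left]
  intro a ha hb
  simp only [Finset.mem_Ioc] at ha hb
  omega

open Classical in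
lemma cntIoc_le (X : Set ℕ) (m n : ℕ) : cntIoc X m n ≤ n - m := by
  calc cntIoc X m n ≤ (Finset.Ioc m n).card := Finset.card_filter_le _ _
  _ = n - m := Nat.card_Ioc m n

lemma cnt_mono (X : Set ℕ) {m n : ℕ} (h : m ≤ n) : cnt X m ≤ cnt X n := by
  rw [cnt_split X h]; omega

lemma cnt_le (X : Set ℕ) (n : ℕ) : cnt X n ≤ n := by
  have := cntIoc_le X 0 n; unfold cnt; omega

open Classical in
lemma cntIoc_mono_set {X Y : Set ℕ} (h : X ⊆ Y) (m n : ℕ) : cntIoc X m n ≤ cntIoc Y m n := by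
  unfold cntIoc
  refine Finset.card_le_card fun x hx => ?_
  simp only [Finset.mem_filter] at *
  exact ⟨hx.1, h hx.2⟩

open Classical in
lemma cntIoc_union {X Y : Set ℕ} (h : Disjoint X Y) (m n : ℕ) :
    cntIoc (X ∪ Y) m n = cntIoc X m n + cntIoc Y m n := by
  unfold cntIoc
  rw [Finset.card_filter, Finset.card_filter, Finset.card_filter, ← Finset.sum_add_distrib]
  refine Finset.sum_congr rfl fun x _ => ?_
  by_cases hx : x ∈ X <;> by_cases hy : x ∈ Y
  · exact absurd hy (Set.disjoint_left.mp h hx)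
  all_goals simp [hx, hy, Set.mem_union]

lemma cnt_union {X Y : Set ℕ} (h : Disjoint X Y) (n : ℕ) :
    cnt (X ∪ Y) n = cnt X n + cnt Y n := cntIoc_union h 0 n

open Classical in
lemma cnt_univ (n : ℕ) : cnt Set.univ n = n := by
  unfold cnt cntIoc
  simp [Nat.card_Ioc]


open Classical in
lemma count_eq_cnt (X : Set ℕ) (n : ℕ) : count X n = cnt X n := by
  unfold count cnt cntIoc chiFun
  rw [← Finset.Icc_add_one_left_eq_Ioc, Nat.zero_add, Finset.card_filter]
  push_cast
  refine Finset.sum_congr rfl fun x _ => ?_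
  by_cases hx : x ∈ X <;> simp [hx]

open Classical in
lemma cntIoc_mono_mem {X Y : Set ℕ} (m n : ℕ) (h : ∀ k, m < k → k ≤ n → k ∈ X → k ∈ Y) :
    cntIoc X m n ≤ cntIoc Y m n := by
  unfold cntIoc
  refine Finset.card_le_card fun x hx => ?_
  simp only [Finset.mem_filter, Finset.mem_Ioc] at *
  exact ⟨hx.1, h x hx.1.1 hx.1.2 hx.2⟩

open Classical in
/-- The greedy counting function. -/
def grdF (B : Set ℕ) (d : ℝ) : ℕ → ℕ
  | 0 => 0
  | n+1 => grdF B d n + (if (n+1) ∈ B ∧ ((grdF B d n : ℝ) + 1 ≤ d * (n+1)) then 1 else 0)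

/-- The greedy subset. -/
def grdA (B : Set ℕ) (d : ℝ) : Set ℕ :=
  {k | 0 < k ∧ k ∈ B ∧ ((grdF B d (k-1) : ℝ) + 1 ≤ d * k)}

lemma grdA_subset (B : Set ℕ) (d : ℝ) : grdA B d ⊆ B := fun _ hk => hk.2.1

open Classical in
lemma count_grdA (B : Set ℕ) (d : ℝ) (n : ℕ) : count (grdA B d) n = grdF B d n := by
  induction n with
  | zero => simp [count, grdF]
  | succ n ih =>
    rw [count, Finset.sum_Icc_succ_top (Nat.one_le_iff_ne_zero.mpr (Nat.succ_ne_zero n)), ← count]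
    rw [ih]
    have hmem : (n+1) ∈ grdA B d ↔ ((n+1) ∈ B ∧ ((grdF B d n : ℝ) + 1 ≤ d * ((n:ℝ)+1))) := by
      unfold grdA
      simp only [Set.mem_setOf_eq, Nat.add_sub_cancel, Nat.succ_pos, true_and]
      push_cast
      tauto
    show (grdF B d n : ℝ) + chiFun (grdA B d) (n+1) = (grdF B d (n+1) : ℝ)
    unfold chiFun
    rw [Set.indicator_apply, grdF]
    by_cases h : (n+1) ∈ B ∧ ((grdF B d n : ℝ) + 1 ≤ d * ((n:ℝ)+1))
    · rw [if_pos (hmem.mpr h), if_pos h]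
      push_cast; simp [Pi.one_apply]
    · rw [if_neg (fun hc => h (hmem.mp hc)), if_neg h]
      push_cast; simp

open Classical in
lemma cnt_grdA (B : Set ℕ) (d : ℝ) (n : ℕ) : (cnt (grdA B d) n : ℝ) = grdF B d n := by
  rw [← count_eq_cnt, count_grdA]

lemma grdF_le (B : Set ℕ) {d : ℝ} (hd : 0 ≤ d) (n : ℕ) : (grdF B d n : ℝ) ≤ d * n := by
  induction n with
  | zero => simp [grdF]
  | succ n ih =>
    rw [grdF]
    by_cases h : (n+1) ∈ B ∧ ((grdF B d n : ℝ) + 1 ≤ d * (n+1))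
    · rw [if_pos h]; push_cast; linarith [h.2]
    · rw [if_neg h]
      have : d * n ≤ d * (n+1) := by nlinarith
      push_cast
      push_cast at ih
      linarith

/-- The geometric scale sequence `n, ⌊θn⌋, ⌊θ²n⌋, …`. -/
def nseq (θ : ℝ) (n : ℕ) : ℕ → ℕ
  | 0 => n
  | j+1 => ⌊θ * (nseq θ n j : ℝ)⌋₊

lemma nseq_succ_lt {θ : ℝ} (hθ : θ < 1) (n : ℕ) {j : ℕ} (h : 1 ≤ nseq θ n j) :
    nseq θ n (j+1) < nseq θ n j := by
  rw [nseq]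
  rcases le_or_gt θ 0 with h0 | h0
  · have : θ * (nseq θ n j : ℝ) ≤ 0 := mul_nonpos_of_nonpos_of_nonneg h0 (Nat.cast_nonneg _)
    calc ⌊θ * (nseq θ n j : ℝ)⌋₊ = 0 := Nat.floor_of_nonpos this
    _ < nseq θ n j := h
  · rw [Nat.floor_lt (le_of_lt (mul_pos h0 (by exact_mod_cast h)))]
    have : (1:ℝ) ≤ (nseq θ n j : ℝ) := by exact_mod_cast h
    nlinarith

lemma nseq_succ_le {θ : ℝ} (hθ : θ < 1) (n : ℕ) (j : ℕ) : nseq θ n (j+1) ≤ nseq θ n j := by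
  rcases Nat.eq_zero_or_pos (nseq θ n j) with h | h
  · rw [nseq, h]; simp
  · exact le_of_lt (nseq_succ_lt hθ n h)

lemma nseq_le {θ : ℝ} (hθ : θ < 1) (n : ℕ) (j : ℕ) : nseq θ n j ≤ n := by
  induction j with
  | zero => exact le_rfl
  | succ j ih => exact le_trans (nseq_succ_le hθ n j) ih

lemma nseq_anti {θ : ℝ} (hθ : θ < 1) (n : ℕ) {i j : ℕ} (h : i ≤ j) : nseq θ n j ≤ nseq θ n i := by
  induction j with
  | zero => simp_all
  | succ j ih =>
    rcases Nat.lt_or_ge i (j+1) with h' | h'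
    · exact le_trans (nseq_succ_le hθ n j) (ih (by omega))
    · have : i = j + 1 := by omega
      subst this; exact le_rfl

lemma nseq_exists_le {θ : ℝ} (hθ : θ < 1) (n M : ℕ) : ∃ j, nseq θ n j ≤ M := by
  by_contra hc
  push_neg at hc
  have key : ∀ j, nseq θ n j + j ≤ n := by
    intro j
    induction j with
    | zero => simp [nseq]
    | succ j ih =>
      have h1 : 1 ≤ nseq θ n j := by have := hc j; omega
      have := nseq_succ_lt hθ n h1
      omega
  have := key (n+1)
  have := hc (n+1)
  omega

set_option maxHeartbeats 2000000 in
open Classical in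
lemma grd_lower (B : Set ℕ) (d : ℝ) (hd0 : 0 ≤ d) (hd1 : d ≤ 1)
    (H : ∀ ε, 0 < ε → ∀ θ : ℝ, 0 < θ → θ < 1 → ∃ N : ℕ, ∀ n, N ≤ n →
      (d - ε) * ((n:ℝ) - (⌊θ * (n:ℝ)⌋₊ : ℝ)) ≤ (cnt B n : ℝ) - (cnt B ⌊θ * (n:ℝ)⌋₊ : ℝ)) :
    ∀ ε, 0 < ε → ∃ N : ℕ, ∀ n, N ≤ n → (d - ε) * n ≤ (grdF B d n : ℝ) := by
  intro ε hε
  rcases le_or_gt d ε with hdε | hdε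
  · refine ⟨0, fun n _ => ?_⟩
    have : (d - ε) * n ≤ 0 := mul_nonpos_of_nonpos_of_nonneg (by linarith) (Nat.cast_nonneg n)
    exact le_trans this (Nat.cast_nonneg _)
  · have hε1 : ε < 1 := lt_of_lt_of_le hdε hd1
    set θ : ℝ := 1 - ε/4 with hθdef
    have hθ0 : 0 < θ := by simp only [hθdef]; linarith
    have hθ1 : θ < 1 := by simp only [hθdef]; linarith
    clear_value θ
    obtain ⟨N, hN⟩ := H (ε/2) (by linarith) θ hθ0 hθ1
    refine ⟨N + 1 + ⌈12/ε⌉₊ + ⌈(2*(N:ℝ)+2)/ε⌉₊, fun n hn => ?_⟩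
    have hnN : N < n := by omega
    have hn12 : (12:ℝ) ≤ ε * n := by
      have h1 : (12/ε : ℝ) ≤ (⌈12/ε⌉₊ : ℕ) := Nat.le_ceil _
      have h2 : ((⌈12/ε⌉₊ : ℕ) : ℝ) ≤ (n:ℝ) := by exact_mod_cast (by omega : ⌈12/ε⌉₊ ≤ n)
      rw [div_le_iff₀ hε] at h1
      nlinarith
    have hn2N : 2*(N:ℝ) + 2 ≤ ε * n := by
      have h1 : ((2*(N:ℝ)+2)/ε : ℝ) ≤ (⌈(2*(N:ℝ)+2)/ε⌉₊ : ℕ) := Nat.le_ceil _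
      have h2 : ((⌈(2*(N:ℝ)+2)/ε⌉₊ : ℕ) : ℝ) ≤ (n:ℝ) := by
        exact_mod_cast (by omega : ⌈(2*(N:ℝ)+2)/ε⌉₊ ≤ n)
      rw [div_le_iff₀ hε] at h1
      nlinarith
    -- the last "nearly full" time m ≤ n
    have hS : ((Finset.Iic n).filter (fun m : ℕ => d*(m:ℝ) - 1 ≤ (grdF B d m : ℝ))).Nonempty := by
      refine ⟨0, ?_⟩
      simp only [Finset.mem_filter, Finset.mem_Iic]
      exact ⟨Nat.zero_le n, by simp [grdF]⟩
    set m := ((Finset.Iic n).filter (fun m : ℕ => d*(m:ℝ) - 1 ≤ (grdF B d m : ℝ))).max' hS with hmdef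
    have hm_mem := ((Finset.Iic n).filter
      (fun m : ℕ => d*(m:ℝ) - 1 ≤ (grdF B d m : ℝ))).max'_mem hS
    rw [Finset.mem_filter, Finset.mem_Iic] at hm_mem
    have hm_le : m ≤ n := hm_mem.1
    have hm_full : d*(m:ℝ) - 1 ≤ (grdF B d m : ℝ) := hm_mem.2
    have hm_max : ∀ k, k ≤ n → d*(k:ℝ) - 1 ≤ (grdF B d k : ℝ) → k ≤ m := by
      intro k h1 h2
      exact Finset.le_max' _ k (by rw [Finset.mem_filter, Finset.mem_Iic]; exact ⟨h1, h2⟩)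
    clear hm_mem hmdef
    clear_value m
    clear hS
    -- no element of B in (m, n] is skipped
    have hskip : ∀ k, m < k → k ≤ n → k ∈ B → k ∈ grdA B d := by
      intro k hk1 hk2 hkB
      by_contra hkA
      have hcond : ¬((grdF B d (k-1) : ℝ) + 1 ≤ d * k) := fun hc => hkA ⟨by omega, hkB, hc⟩
      push_neg at hcond
      have hstep : (grdF B d (k-1) : ℝ) ≤ grdF B d k := by
        obtain ⟨k', rfl⟩ : ∃ k', k = k'+1 := ⟨k-1, by omega⟩
        simp only [Nat.add_sub_cancel]
        have : grdF B d k' ≤ grdF B d (k'+1) := by rw [grdF]; omega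
        exact_mod_cast this
      have hfull : d * (k:ℝ) - 1 ≤ grdF B d k := by linarith
      have := hm_max k hk2 hfull
      omega
    rcases eq_or_lt_of_le hm_le with hmn | hmn
    · -- m = n : already nearly full
      rw [hmn] at hm_full
      nlinarith [(Nat.cast_nonneg n : (0:ℝ) ≤ (n:ℝ))]
    · -- m < n
      have hAB : cntIoc B m n ≤ cntIoc (grdA B d) m n := cntIoc_mono_mem m n hskip
      have hsplitA : cnt (grdA B d) n = cnt (grdA B d) m + cntIoc (grdA B d) m n :=
        cnt_split _ hm_le
      have hsplitB : cnt B n = cnt B m + cntIoc B m n := cnt_split _ hm_le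
      have hg : (grdF B d n : ℝ) ≥ d*(m:ℝ) - 1 + ((cnt B n : ℝ) - cnt B m) := by
        have e1 : (cnt (grdA B d) n : ℝ) = (cnt (grdA B d) m : ℝ) + cntIoc (grdA B d) m n := by
          rw [hsplitA]; push_cast; ring
        have e2 : (cnt B n : ℝ) = (cnt B m : ℝ) + cntIoc B m n := by
          rw [hsplitB]; push_cast; ring
        have e3 : (cntIoc B m n : ℝ) ≤ (cntIoc (grdA B d) m n : ℝ) := by exact_mod_cast hAB
        rw [cnt_grdA] at e1
        rw [← cnt_grdA B d m] at hm_full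
        linarith
      -- the chain of windows
      set M := max m N with hMdef
      clear_value M
      have chain : ∀ J, (∀ j, j < J → M < nseq θ n j) →
          (d - ε/2) * ((n:ℝ) - nseq θ n J) ≤ (cnt B n : ℝ) - cnt B (nseq θ n J) := by
        intro J
        induction J with
        | zero => intro _; simp [nseq]
        | succ J ih =>
          intro hJ
          have h1 := ih (fun j hj => hJ j (by omega))
          have h2 : N ≤ nseq θ n J := by
            have := hJ J (by omega)
            omega
          have h3 := hN (nseq θ n J) h2
          have h4 : nseq θ n (J+1) = ⌊θ * (nseq θ n J : ℝ)⌋₊ := rfl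
          have h5 : cnt B (nseq θ n (J+1)) ≤ cnt B (nseq θ n J) :=
            cnt_mono B (nseq_succ_le hθ1 n J)
          rw [h4]
          have key : (d - ε/2) * ((n:ℝ) - (⌊θ * (nseq θ n J : ℝ)⌋₊ : ℕ)) =
              (d - ε/2) * ((n:ℝ) - nseq θ n J) +
              (d - ε/2) * ((nseq θ n J : ℝ) - (⌊θ * (nseq θ n J : ℝ)⌋₊ : ℕ)) := by ring
          rw [key]
          linarith
      have hex : ∃ j, nseq θ n j ≤ M := nseq_exists_le hθ1 n M
      set J := Nat.find hex with hJdef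
      have hJle : nseq θ n J ≤ M := Nat.find_spec hex
      have hJmin : ∀ j, j < J → M < nseq θ n j := fun j hj =>
        lt_of_not_ge (Nat.find_min hex hj)
      clear hJdef
      clear_value J
      have hJpos : 0 < J := by
        rcases Nat.eq_zero_or_pos J with h0 | h0
        · exfalso
          have : nseq θ n 0 ≤ M := h0 ▸ hJle
          simp only [nseq] at this
          have : n ≤ N := by
            rw [hMdef] at this
            rcases max_cases m N with ⟨h1, h2⟩ | ⟨h1, h2⟩ <;> omega
          omega
        · exact h0
      have hchain := chain J hJmin
      obtain ⟨J', rfl⟩ : ∃ J', J = J' + 1 := ⟨J-1, by omega⟩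
      have hJ1 : nseq θ n (J'+1) = ⌊θ * (nseq θ n J' : ℝ)⌋₊ := rfl
      have hprev : M < nseq θ n J' := hJmin J' (by omega)
      have hba : θ * (nseq θ n J' : ℝ) - 1 < (nseq θ n (J'+1) : ℝ) := by
        rw [hJ1]
        exact Nat.sub_one_lt_floor _
      have han : nseq θ n (J'+1) ≤ n := nseq_le hθ1 n (J'+1)
      rcases le_or_gt (nseq θ n (J'+1)) m with ham | ham
      · -- nseq J ≤ m : main case
        set a := nseq θ n (J'+1) with hadef
        set b := nseq θ n J' with hbdef
        clear_value a b
        have hsB : cnt B m = cnt B a + cntIoc B a m := cnt_split B ham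
        have hIle : cntIoc B a m ≤ m - a := cntIoc_le B a m
        have hIle' : (cntIoc B a m : ℝ) ≤ (m:ℝ) - a := by
          have : (cntIoc B a m : ℝ) ≤ ((m - a : ℕ) : ℝ) := by exact_mod_cast hIle
          rw [Nat.cast_sub ham] at this
          exact this
        have e4 : (cnt B m : ℝ) = (cnt B a : ℝ) + cntIoc B a m := by exact_mod_cast hsB
        -- m - a ≤ (ε/4) n + 1
        have hmb : (m:ℝ) < (b:ℝ) := by
          have h1 : m ≤ M := hMdef ▸ le_max_left m N
          exact_mod_cast (by omega : m < b)
        have hbn : (b:ℝ) ≤ n := by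
          have h1 : b ≤ n := by rw [hbdef]; exact nseq_le hθ1 n J'
          exact_mod_cast h1
        have hm_n : (m:ℝ) ≤ (n:ℝ) := by exact_mod_cast hm_le
        have hma : (m:ℝ) - a ≤ (ε/4) * n + 1 := by
          have h6 : θ * (m:ℝ) ≤ θ * (b:ℝ) := mul_le_mul_of_nonneg_left hmb.le hθ0.le
          have h8 : θ * (m:ℝ) - 1 < (a:ℝ) := by linarith
          have h9 : (ε/4) * (m:ℝ) ≤ (ε/4) * n := mul_le_mul_of_nonneg_left hm_n (by linarith)
          have h10 : θ * (m:ℝ) = (m:ℝ) - (ε/4)*(m:ℝ) := by rw [hθdef]; ring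
          linarith
        -- combine
        have hfin : (d - ε/2) * ((n:ℝ) - a) ≤ (cnt B n : ℝ) - cnt B a := hchain
        have key2 : (d - ε/2) * ((n:ℝ) - a) =
            (d - ε/2) * ((n:ℝ) - m) + (d - ε/2) * ((m:ℝ) - a) := by ring
        have hc1 : (0:ℝ) ≤ (m:ℝ) - a := by
          have : (a:ℝ) ≤ m := by exact_mod_cast ham
          linarith
        have hc2 : (0:ℝ) ≤ (n:ℝ) - m := by
          have : (m:ℝ) ≤ n := by exact_mod_cast hm_le
          linarith
        have hm0 : (0:ℝ) ≤ m := Nat.cast_nonneg m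
        nlinarith [hg, hfin, hma, hIle', e4, hc1, hc2, hn12, key2,
          mul_nonneg (show (0:ℝ) ≤ d - ε/2 by linarith) hc1,
          mul_nonneg (show (0:ℝ) ≤ ε/2 by linarith) hm0,
          mul_nonneg (show (0:ℝ) ≤ ε/2 by linarith) hc2]
      · -- m < nseq J ≤ N
        set a := nseq θ n (J'+1) with hadef
        clear_value a
        have haN : a ≤ N := by
          rw [hMdef] at hJle
          rcases max_cases m N with ⟨h1, h2⟩ | ⟨h1, h2⟩ <;> omega
        have hsplit2 : cntIoc B m n = cntIoc B m a + cntIoc B a n :=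
          cntIoc_split B (le_of_lt ham) han
        have hsB2 : cnt B n = cnt B a + cntIoc B a n := cnt_split B han
        have e5 : (cnt B n : ℝ) = (cnt B a : ℝ) + cntIoc B a n := by exact_mod_cast hsB2
        have e6 : (cntIoc B m n : ℝ) = (cntIoc B m a : ℝ) + cntIoc B a n := by
          exact_mod_cast hsplit2
        have hg2 : (grdF B d n : ℝ) ≥ -1 + ((cnt B n : ℝ) - cnt B a) := by
          have h7 : (0:ℝ) ≤ cntIoc B m a := Nat.cast_nonneg _
          have h8 : (0:ℝ) ≤ d * m := mul_nonneg hd0 (Nat.cast_nonneg _)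
          have e2 : (cnt B n : ℝ) = (cnt B m : ℝ) + cntIoc B m n := by
            exact_mod_cast hsplitB
          linarith [hg]
        have hfin : (d - ε/2) * ((n:ℝ) - a) ≤ (cnt B n : ℝ) - cnt B a := hchain
        have haN' : (a:ℝ) ≤ N := by exact_mod_cast haN
        have ha0 : (0:ℝ) ≤ a := Nat.cast_nonneg _
        nlinarith [hg2, hfin, hn2N, haN', ha0,
          mul_le_mul_of_nonneg_right (show d - ε/2 ≤ 1 by linarith) ha0]

lemma grd_density (B : Set ℕ) (d : ℝ) (hd0 : 0 ≤ d) (hd1 : d ≤ 1)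
    (H : ∀ ε, 0 < ε → ∀ θ : ℝ, 0 < θ → θ < 1 → ∃ N : ℕ, ∀ n, N ≤ n →
      (d - ε) * ((n:ℝ) - (⌊θ * (n:ℝ)⌋₊ : ℝ)) ≤ (cnt B n : ℝ) - (cnt B ⌊θ * (n:ℝ)⌋₊ : ℝ)) :
    HasDensity (grdA B d) d := by
  rw [HasDensity, Metric.tendsto_atTop]
  intro ε hε
  obtain ⟨N1, hN1⟩ := grd_lower B d hd0 hd1 H (ε/2) (by linarith)
  refine ⟨max N1 1, fun n hn => ?_⟩
  have hn1 : 1 ≤ n := le_trans (le_max_right N1 1) hn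
  have hnN1 : N1 ≤ n := le_trans (le_max_left N1 1) hn
  have hn0 : (0:ℝ) < n := by exact_mod_cast hn1
  have hup : count (grdA B d) n ≤ d * n := by
    rw [count_grdA]; exact grdF_le B hd0 n
  have hlo : (d - ε/2) * n ≤ count (grdA B d) n := by
    rw [count_grdA]; exact hN1 n hnN1
  rw [Real.dist_eq, abs_lt]
  constructor
  · have : d - ε/2 ≤ count (grdA B d) n / n := by
      rw [le_div_iff₀ hn0]; exact hlo
    linarith
  · have : count (grdA B d) n / n ≤ d := by
      rw [div_le_iff₀ hn0]; exact hup
    linarith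

lemma div_div_div_same (a b c : ℝ) (hc : c ≠ 0) : a / c / (b / c) = a / b := by
  rcases eq_or_ne b 0 with rfl | hb
  · simp
  · field_simp

lemma hasDensity_cnt {X : Set ℕ} {e : ℝ} (h : HasDensity X e) :
    Tendsto (fun n : ℕ => (cnt X n : ℝ) / n) atTop (𝓝 e) := by
  refine h.congr fun n => ?_
  rw [count_eq_cnt]

/-- The window quotient tends to the density. -/
lemma window_tendsto_density {X : Set ℕ} {e : ℝ} (h : HasDensity X e)
    {θ : ℝ} (hθ0 : 0 < θ) (hθ1 : θ < 1) :
    Tendsto (fun n : ℕ => ((cnt X n : ℝ) - cnt X ⌊θ * (n:ℝ)⌋₊) /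
      ((n:ℝ) - (⌊θ * (n:ℝ)⌋₊ : ℕ))) atTop (𝓝 e) := by
  have hc := hasDensity_cnt h
  set mfl : ℕ → ℕ := fun n => ⌊θ * (n:ℝ)⌋₊ with hmfl
  have hmfl_atTop : Tendsto mfl atTop atTop := by
    apply tendsto_nat_floor_atTop.comp
    exact Tendsto.const_mul_atTop hθ0 tendsto_natCast_atTop_atTop
  -- m/n → θ
  have h1 : Tendsto (fun n : ℕ => (mfl n : ℝ) / n) atTop (𝓝 θ) := by
    refine tendsto_of_tendsto_of_tendsto_of_le_of_le'
      (g := fun n : ℕ => θ - 1/(n:ℝ)) (h := fun _ : ℕ => θ) ?_ ?_ ?_ ?_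
    · simpa using tendsto_const_nhds.sub (tendsto_one_div_atTop_nhds_zero_nat : Tendsto (fun n : ℕ => 1 / (n:ℝ)) atTop (𝓝 0))
    · exact tendsto_const_nhds
    · filter_upwards [eventually_ge_atTop 1] with n hn
      have hn0 : (0:ℝ) < n := by exact_mod_cast hn
      have h8 : θ * (n:ℝ) - 1 < (mfl n : ℝ) := Nat.sub_one_lt_floor _
      rw [le_div_iff₀ hn0]
      have h7 : (θ - 1/(n:ℝ)) * n = θ * n - 1 := by field_simp
      linarith
    · filter_upwards [eventually_ge_atTop 1] with n hn
      have hn0 : (0:ℝ) < n := by exact_mod_cast hn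
      have : (mfl n : ℝ) ≤ θ * n := Nat.floor_le (by positivity)
      rw [div_le_iff₀ hn0]
      linarith
  -- (cnt X (mfl n))/n → θ e
  have h3 : Tendsto (fun n : ℕ => (cnt X (mfl n) : ℝ) / (mfl n)) atTop (𝓝 e) :=
    hc.comp hmfl_atTop
  have h4 : Tendsto (fun n : ℕ => (cnt X (mfl n) : ℝ) / n) atTop (𝓝 (θ * e)) := by
    have := h1.mul h3
    apply this.congr'
    filter_upwards [hmfl_atTop.eventually_ge_atTop 1, eventually_ge_atTop 1] with n hm hn
    have hm0 : (mfl n : ℝ) ≠ 0 := by positivity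
    field_simp
  -- numerator/n and denominator/n
  have hnum : Tendsto (fun n : ℕ => ((cnt X n : ℝ) - cnt X (mfl n)) / n) atTop
      (𝓝 (e - θ * e)) := by
    have := hc.sub h4
    apply this.congr fun n => (sub_div _ _ _).symm
  have hden : Tendsto (fun n : ℕ => ((n:ℝ) - mfl n) / n) atTop (𝓝 (1 - θ)) := by
    have h5 : Tendsto (fun n : ℕ => (n:ℝ)/n) atTop (𝓝 1) := by
      apply tendsto_const_nhds.congr'
      filter_upwards [eventually_ge_atTop 1] with n hn
      have : (n:ℝ) ≠ 0 := by positivity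
      rw [div_self this]
    have := h5.sub h1
    apply this.congr fun n => (sub_div _ _ _).symm
  have hne : (1:ℝ) - θ ≠ 0 := by linarith
  have h6 := hnum.div hden hne
  have he : (e - θ * e) / (1 - θ) = e := by field_simp
  rw [he] at h6
  apply h6.congr'
  filter_upwards [eventually_ge_atTop 1] with n hn
  have hn0 : (n:ℝ) ≠ 0 := by positivity
  show ((cnt X n : ℝ) - cnt X (mfl n)) / (n:ℝ) / (((n:ℝ) - mfl n) / (n:ℝ)) = _
  rw [div_div_div_same _ _ _ hn0]


lemma exists_window_measure (θ : ℝ) (hθ0 : 0 < θ) (hθ1 : θ < 1) (s : ℕ → ℕ)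
    (hs1 : ∀ k, (1:ℝ) ≤ (1 - θ) * s k) (hs2 : Tendsto s atTop atTop) :
    ∃ (F : Filter ℕ) (μ : Set ℕ → ℝ), F.NeBot ∧ IsDensityMeasure μ ∧
      ∀ X : Set ℕ, Tendsto (fun k => ((cnt X (s k) : ℝ) - cnt X ⌊θ * ((s k : ℕ):ℝ)⌋₊) /
        ((s k : ℝ) - (⌊θ * ((s k : ℕ):ℝ)⌋₊ : ℕ))) F (𝓝 (μ X)) := by
  obtain ⟨F, hF⟩ := Ultrafilter.exists_le (atTop : Filter ℕ)
  set q : Set ℕ → ℕ → ℝ := fun X k => ((cnt X (s k) : ℝ) - cnt X ⌊θ * ((s k : ℕ):ℝ)⌋₊) /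
        ((s k : ℝ) - (⌊θ * ((s k : ℕ):ℝ)⌋₊ : ℕ)) with hq
  -- basic facts about the denominator
  have hfl : ∀ k, (⌊θ * ((s k : ℕ):ℝ)⌋₊ : ℝ) ≤ θ * s k := fun k =>
    Nat.floor_le (by positivity)
  have hden : ∀ k, (1:ℝ) ≤ (s k : ℝ) - (⌊θ * ((s k : ℕ):ℝ)⌋₊ : ℕ) := by
    intro k
    have h1 := hs1 k
    have h2 := hfl k
    nlinarith
  have hmn : ∀ k, ⌊θ * ((s k : ℕ):ℝ)⌋₊ ≤ s k := by
    intro k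
    have := hden k
    have : ((⌊θ * ((s k : ℕ):ℝ)⌋₊ : ℕ) : ℝ) ≤ (s k : ℝ) := by linarith
    exact_mod_cast this
  -- the quotient is in [0,1]
  have hq01 : ∀ X k, q X k ∈ Set.Icc (0:ℝ) 1 := by
    intro X k
    set m := ⌊θ * ((s k : ℕ):ℝ)⌋₊
    have hsplit : cnt X (s k) = cnt X m + cntIoc X m (s k) := cnt_split X (hmn k)
    have hnum : (cnt X (s k) : ℝ) - cnt X m = (cntIoc X m (s k) : ℕ) := by
      rw [hsplit]; push_cast; ring
    have hnum_le : (cntIoc X m (s k) : ℝ) ≤ (s k : ℝ) - m := by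
      have h1 : cntIoc X m (s k) ≤ s k - m := cntIoc_le X m (s k)
      have h2 : ((s k - m : ℕ) : ℝ) = (s k : ℝ) - m := by
        rw [Nat.cast_sub (hmn k)]
      calc (cntIoc X m (s k) : ℝ) ≤ ((s k - m : ℕ) : ℝ) := by exact_mod_cast h1
      _ = (s k : ℝ) - m := h2
    have hd := hden k
    constructor
    · apply div_nonneg _ (by linarith)
      rw [hnum]; positivity
    · rw [div_le_one (by linarith)]
      rw [hnum]; linarith
  -- ultrafilter limits exist
  have hT : ∀ X : Set ℕ, ∃ c, Tendsto (q X) (F : Filter ℕ) (𝓝 c) := by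
    intro X
    obtain ⟨c, -, hc⟩ := isCompact_Icc.ultrafilter_le_nhds (F.map (q X)) (by
      rw [Ultrafilter.coe_map]
      exact le_principal_iff.mpr (Filter.mem_map.mpr (Filter.Eventually.of_forall (hq01 X))))
    exact ⟨c, hc⟩
  set μ : Set ℕ → ℝ := fun X => limUnder (F : Filter ℕ) (q X) with hμ
  have hTμ : ∀ X, Tendsto (q X) (F : Filter ℕ) (𝓝 (μ X)) := fun X =>
    tendsto_nhds_limUnder (hT X)
  refine ⟨F, μ, F.neBot', ⟨?_, ?_, ?_, ?_⟩, hTμ⟩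
  · -- additivity
    intro X Y hXY
    have hqadd : q (X ∪ Y) = fun k => q X k + q Y k := by
      funext k
      simp only [hq]
      have h1 : cnt (X ∪ Y) (s k) = cnt X (s k) + cnt Y (s k) := cnt_union hXY _
      have h2 : cnt (X ∪ Y) ⌊θ * ((s k : ℕ):ℝ)⌋₊ =
          cnt X ⌊θ * ((s k : ℕ):ℝ)⌋₊ + cnt Y ⌊θ * ((s k : ℕ):ℝ)⌋₊ := cnt_union hXY _
      rw [h1, h2]
      push_cast
      ring
    have := (hTμ X).add (hTμ Y)
    rw [← hqadd] at this
    exact tendsto_nhds_unique (hTμ (X ∪ Y)) this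
  · -- range
    intro X
    constructor
    · exact ge_of_tendsto (hTμ X) (Filter.Eventually.of_forall fun k => (hq01 X k).1)
    · exact le_of_tendsto (hTμ X) (Filter.Eventually.of_forall fun k => (hq01 X k).2)
  · -- univ
    have hq1 : q Set.univ = fun _ => (1:ℝ) := by
      funext k
      simp only [hq]
      rw [cnt_univ, cnt_univ]
      exact div_self (by have := hden k; linarith)
    refine tendsto_nhds_unique (hTμ Set.univ) ?_
    rw [hq1]
    exact tendsto_const_nhds
  · -- extends density
    intro X e hX
    have h1 := (window_tendsto_density hX hθ0 hθ1).comp hs2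
    have h2 : Tendsto (q X) (F : Filter ℕ) (𝓝 e) := (h1.mono_left hF)
    exact tendsto_nhds_unique (hTμ X) h2

/-- For every `B ⊆ ℕ` there is `A ⊆ B` having asymptotic density with `d(A) = λ̲(B)`. -/
theorem stmt6 (B : Set ℕ) : ∃ A : Set ℕ, A ⊆ B ∧ HasDensity A (lamLower B) := by
  set S := {r | ∃ μ, IsDensityMeasure μ ∧ μ B = r} with hS
  -- a density measure exists
  obtain ⟨F₀, μ₀, hne₀, hDM₀, -⟩ := exists_window_measure (1/2) (by norm_num) (by norm_num)
    (fun k => 2*(k+1))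
    (by intro k; push_cast; nlinarith [Nat.cast_nonneg (α := ℝ) k])
    (tendsto_atTop_atTop.mpr fun b => ⟨b, fun a ha => by omega⟩)
  have hSne : μ₀ B ∈ S := ⟨μ₀, hDM₀, rfl⟩
  have hSbdd : ∀ r ∈ S, (0:ℝ) ≤ r := by
    rintro r ⟨μ, hμ, rfl⟩
    exact (hμ.2.1 B).1
  have hbdd : BddBelow S := ⟨0, fun r hr => hSbdd r hr⟩
  set L := lamLower B with hL
  have hL0 : 0 ≤ L := Real.sInf_nonneg hSbdd
  have hL1 : L ≤ 1 := by
    have h1 : L ≤ μ₀ B := csInf_le hbdd hSne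
    have h2 : μ₀ B ≤ 1 := (hDM₀.2.1 B).2
    linarith
  -- the window hypothesis for L
  have H : ∀ ε, 0 < ε → ∀ θ : ℝ, 0 < θ → θ < 1 → ∃ N : ℕ, ∀ n, N ≤ n →
      (L - ε) * ((n:ℝ) - (⌊θ * (n:ℝ)⌋₊ : ℝ)) ≤ (cnt B n : ℝ) - (cnt B ⌊θ * (n:ℝ)⌋₊ : ℝ) := by
    intro ε hε θ hθ0 hθ1
    by_contra hcon
    push_neg at hcon
    -- extract a bad subsequence
    set N₀ := ⌈1/(1-θ)⌉₊ with hN₀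
    have hg : ∀ N : ℕ, ∃ n, N ≤ n ∧
        (cnt B n : ℝ) - (cnt B ⌊θ * (n:ℝ)⌋₊ : ℝ) < (L - ε) * ((n:ℝ) - (⌊θ * (n:ℝ)⌋₊ : ℝ)) :=
      hcon
    set g : ℕ → ℕ := fun N => (hg N).choose with hgdef
    have hgspec : ∀ N, N ≤ g N ∧ (cnt B (g N) : ℝ) - (cnt B ⌊θ * ((g N):ℝ)⌋₊ : ℝ) <
        (L - ε) * (((g N):ℝ) - (⌊θ * ((g N):ℝ)⌋₊ : ℝ)) := fun N => (hg N).choose_spec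
    set s : ℕ → ℕ := fun k => Nat.rec (g N₀) (fun _ sk => g (max (sk+1) N₀)) k with hsdef
    have hs0 : s 0 = g N₀ := rfl
    have hssucc : ∀ k, s (k+1) = g (max (s k + 1) N₀) := fun k => rfl
    have hsN₀ : ∀ k, N₀ ≤ s k := by
      intro k
      cases k with
      | zero => exact (hgspec N₀).1
      | succ k =>
        rw [hssucc]
        exact le_trans (le_max_right _ _) (hgspec _).1
    have hsbad : ∀ k, (cnt B (s k) : ℝ) - (cnt B ⌊θ * ((s k):ℝ)⌋₊ : ℝ) <
        (L - ε) * (((s k):ℝ) - (⌊θ * ((s k):ℝ)⌋₊ : ℝ)) := by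
      intro k
      cases k with
      | zero => exact (hgspec N₀).2
      | succ k => rw [hssucc]; exact (hgspec _).2
    have hsmono : StrictMono s := by
      apply strictMono_nat_of_lt_succ
      intro k
      rw [hssucc]
      calc s k < s k + 1 := Nat.lt_succ_self _
      _ ≤ max (s k + 1) N₀ := le_max_left _ _
      _ ≤ g (max (s k + 1) N₀) := (hgspec _).1
    have hs1 : ∀ k, (1:ℝ) ≤ (1 - θ) * s k := by
      intro k
      have h1 : (1/(1-θ) : ℝ) ≤ N₀ := Nat.le_ceil _
      have h2 : (N₀ : ℝ) ≤ s k := by exact_mod_cast hsN₀ k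
      have h3 : (0:ℝ) < 1 - θ := by linarith
      rw [div_le_iff₀ h3] at h1
      nlinarith
    obtain ⟨F, μ, hne, hDM, hT⟩ := exists_window_measure θ hθ0 hθ1 s hs1
      hsmono.tendsto_atTop
    have hden : ∀ k, (1:ℝ) ≤ (s k : ℝ) - (⌊θ * ((s k):ℝ)⌋₊ : ℕ) := by
      intro k
      have h2 : (⌊θ * ((s k):ℝ)⌋₊ : ℝ) ≤ θ * s k := Nat.floor_le (by positivity)
      have h1 := hs1 k
      nlinarith
    have hqle : ∀ k, ((cnt B (s k) : ℝ) - cnt B ⌊θ * ((s k):ℝ)⌋₊) /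
        ((s k : ℝ) - (⌊θ * ((s k):ℝ)⌋₊ : ℕ)) ≤ L - ε := by
      intro k
      rw [div_le_iff₀ (by linarith [hden k])]
      exact le_of_lt (hsbad k)
    haveI := hne
    have hμB : μ B ≤ L - ε := le_of_tendsto (hT B) (Filter.Eventually.of_forall hqle)
    have hLμ : L ≤ μ B := csInf_le hbdd ⟨μ, hDM, rfl⟩
    linarith
  exact ⟨grdA B L, grdA_subset B L, grd_density B L hL0 hL1 H⟩
end
end
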